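/- arXiv:2311.15263 — 5 statements merged into one kernel-verified Lean document; each statement's English description precedes it below -/
import Mathlib

section
/- For every m, n ∈ ℕ, the 2m-th moments satisfy E[Ẑ_n^{2m}] = E[Ž_n^{2m}] ≤ E[Z_n^{2m}]. -/
open MeasureTheory ProbabilityTheory Filter
open scoped ENNReal NNReal Topology

def walkβ : ℕ ⊕ (ℕ ⊕ ℕ) → Type
  | .inl _ => ℝ
  | .inr (.inl _) => Bool
  | .inr (.inr _) => ℕ

def walkσ : ∀ i, MeasurableSpace (walkβ i)
  | .inl _ => inferInstanceAs (MeasurableSpace ℝ)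
  | .inr (.inl _) => inferInstanceAs (MeasurableSpace Bool)
  | .inr (.inr _) => inferInstanceAs (MeasurableSpace ℕ)

def walkFam {Ω : Type*} (X : ℕ → Ω → ℝ) (ε : ℕ → Ω → Bool) (U : ℕ → Ω → ℕ) :
    ∀ i, Ω → walkβ i
  | .inl n => X n
  | .inr (.inl n) => ε n
  | .inr (.inr n) => U n

/-- For every `m, n ∈ ℕ`, the `2m`-th moments of the reinforced steps satisfy
`E[Ẑ_n^{2m}] = E[Ž_n^{2m}] ≤ E[Z_n^{2m}]`. -/
theorem reinforced_step_even_moment_bound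
    {Ω : Type*} {mΩ : MeasurableSpace Ω} {μ : Measure Ω} [IsProbabilityMeasure μ]
    (p : ℝ) (hp : p ∈ Set.Ioo (0 : ℝ) 1)
    (Z : ℕ → Ω → ℝ) (ε : ℕ → Ω → Bool) (U : ℕ → Ω → ℕ)
    (hZmeas : ∀ n, Measurable (Z n)) (hεmeas : ∀ n, Measurable (ε n))
    (hUmeas : ∀ n, Measurable (U n))
    (hindep : iIndepFun (m := walkσ) (walkFam Z ε U) μ)
    (hε : ∀ n, 2 ≤ n → μ {ω | ε n ω = true} = ENNReal.ofReal p)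
    (hU : ∀ n, 2 ≤ n → ∀ k ∈ Finset.Icc 1 (n - 1), μ {ω | U n ω = k} = (((n - 1 : ℕ)) : ℝ≥0∞)⁻¹)
    (hUrange : ∀ n, 2 ≤ n → ∀ ω, U n ω ∈ Finset.Icc 1 (n - 1))
    (hmom : ∀ m n : ℕ, Integrable (fun ω => (Z n ω) ^ (2 * m)) μ)
    (hmono : ∀ m : ℕ, ∀ j k : ℕ, j ≤ k →
      ∫ ω, (Z j ω) ^ (2 * m) ∂μ ≤ ∫ ω, (Z k ω) ^ (2 * m) ∂μ)
    (hatZ checkZ : ℕ → Ω → ℝ)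
    (hhat1 : hatZ 1 = Z 1) (hcheck1 : checkZ 1 = Z 1)
    (hhatrec : ∀ n, 2 ≤ n → ∀ ω,
      hatZ n ω = if ε n ω = true then hatZ (U n ω) ω else Z n ω)
    (hcheckrec : ∀ n, 2 ≤ n → ∀ ω,
      checkZ n ω = if ε n ω = true then -checkZ (U n ω) ω else Z n ω) :
    ∀ m n : ℕ, 1 ≤ n →
      (∫ ω, (hatZ n ω) ^ (2 * m) ∂μ = ∫ ω, (checkZ n ω) ^ (2 * m) ∂μ) ∧
      ∫ ω, (hatZ n ω) ^ (2 * m) ∂μ ≤ ∫ ω, (Z n ω) ^ (2 * m) ∂μ := by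
  classical
  intro m
  obtain ⟨hp0, hp1⟩ := hp
  -- measurability of the family
  have hFmeas : ∀ i, @Measurable Ω (walkβ i) mΩ (walkσ i) (walkFam Z ε U i) := by
    rintro (n | n | n)
    · exact hZmeas n
    · exact hεmeas n
    · exact hUmeas n
  have hiI : iIndep (fun i => (walkσ i).comap (walkFam Z ε U i)) μ := hindep
  -- index function
  let widx : ℕ ⊕ (ℕ ⊕ ℕ) → ℕ := fun i => match i with
    | .inl n => n | .inr (.inl n) => n | .inr (.inr n) => n
  let mA : ℕ → MeasurableSpace Ω := fun N =>
    ⨆ i ∈ {i | widx i ≤ N}, (walkσ i).comap (walkFam Z ε U i)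
  have hcomap_le : ∀ i N, widx i ≤ N →
      (walkσ i).comap (walkFam Z ε U i) ≤ mA N := fun i N h =>
    le_iSup₂ (f := fun i (_ : i ∈ {i | widx i ≤ N}) =>
      (walkσ i).comap (walkFam Z ε U i)) i h
  have hmA_le : ∀ N, mA N ≤ mΩ := fun N => iSup₂_le fun i _ => (hFmeas i).comap_le
  have hmA_mono : ∀ {j k : ℕ}, j ≤ k → mA j ≤ mA k := fun {j k} h =>
    biSup_mono fun i hi => le_trans hi h
  have hZA : ∀ {n N : ℕ}, n ≤ N → Measurable[mA N] (Z n) := fun {n N} h =>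
    measurable_iff_comap_le.2 (hcomap_le (.inl n) N h)
  have hεA : ∀ {n N : ℕ}, n ≤ N → Measurable[mA N] (ε n) := fun {n N} h =>
    measurable_iff_comap_le.2 (hcomap_le (.inr (.inl n)) N h)
  have hUA : ∀ {n N : ℕ}, n ≤ N → Measurable[mA N] (U n) := fun {n N} h =>
    measurable_iff_comap_le.2 (hcomap_le (.inr (.inr n)) N h)
  -- measurability of hatZ
  have hhatA : ∀ n, 1 ≤ n → Measurable[mA n] (hatZ n) := by
    intro n
    induction n using Nat.strong_induction_on with
    | _ n ih =>
      intro hn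
      rcases lt_or_ge n 2 with h2 | h2
      · obtain rfl : n = 1 := by omega
        rw [hhat1]; exact hZA le_rfl
      · have hrep : hatZ n = fun ω => if ε n ω = true then
            (∑ k ∈ Finset.Icc 1 (n-1), if U n ω = k then hatZ k ω else 0) else Z n ω := by
          funext ω
          rw [hhatrec n h2 ω]
          by_cases hb : ε n ω = true
          · simp only [hb, if_true]
            rw [Finset.sum_ite_eq]
            simp [hUrange n h2 ω]
          · simp [hb]
        rw [hrep]
        apply Measurable.ite ((hεA le_rfl) (measurableSet_singleton true))
        · apply Finset.measurable_sum
          intro k hk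
          rw [Finset.mem_Icc] at hk
          exact Measurable.ite ((hUA le_rfl) (measurableSet_singleton k))
            ((ih k (by omega) hk.1).mono (hmA_mono (by omega)) le_rfl) measurable_const
        · exact hZA le_rfl
  have hhatmeas : ∀ n, 1 ≤ n → Measurable (hatZ n) := fun n hn =>
    (hhatA n hn).mono (hmA_le n) le_rfl
  -- pointwise structure
  have habs : ∀ n, 1 ≤ n → ∀ ω, |checkZ n ω| = |hatZ n ω| ∧
      ∃ j, 1 ≤ j ∧ j ≤ n ∧ |hatZ n ω| = |Z j ω| := by
    intro n
    induction n using Nat.strong_induction_on with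
    | _ n ih =>
      intro hn ω
      rcases lt_or_ge n 2 with h2 | h2
      · obtain rfl : n = 1 := by omega
        exact ⟨by rw [hhat1, hcheck1], 1, le_rfl, le_rfl, by rw [hhat1]⟩
      · rw [hhatrec n h2 ω, hcheckrec n h2 ω]
        by_cases hb : ε n ω = true
        · simp only [hb, if_true]
          have hU' := Finset.mem_Icc.1 (hUrange n h2 ω)
          obtain ⟨e1, j, hj1, hj2, e2⟩ := ih (U n ω) (by omega) hU'.1 ω
          exact ⟨by rw [abs_neg, e1], j, hj1, by omega, e2⟩
        · simp only [hb, if_false]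
          exact ⟨rfl, n, by omega, le_rfl, rfl⟩
  have hpow_nonneg : ∀ x : ℝ, 0 ≤ x ^ (2 * m) := fun x => by
    rw [pow_mul]; positivity
  have habs_pow : ∀ {a b : ℝ}, |a| = |b| → a ^ (2 * m) = b ^ (2 * m) := by
    intro a b h
    rw [pow_mul, pow_mul, ← sq_abs a, h, sq_abs]
  have hbound : ∀ n, 1 ≤ n → ∀ ω,
      hatZ n ω ^ (2 * m) ≤ ∑ j ∈ Finset.Icc 1 n, Z j ω ^ (2 * m) := by
    intro n hn ω
    obtain ⟨-, j, hj1, hj2, e⟩ := habs n hn ω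
    rw [habs_pow e]
    exact Finset.single_le_sum (f := fun j => Z j ω ^ (2 * m))
      (fun i _ => hpow_nonneg _) (Finset.mem_Icc.mpr ⟨hj1, hj2⟩)
  have hIntHat : ∀ n, 1 ≤ n → Integrable (fun ω => hatZ n ω ^ (2 * m)) μ := by
    intro n hn
    refine (integrable_finset_sum (Finset.Icc 1 n) fun j _ => hmom m j).mono
      (((hhatmeas n hn).pow_const _).aestronglyMeasurable) (ae_of_all _ fun ω => ?_)
    rw [Real.norm_eq_abs, abs_of_nonneg (hpow_nonneg _)]
    exact (hbound n hn ω).trans (le_abs_self _)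
  -- the main inequality, by strong induction
  have main : ∀ n, 1 ≤ n →
      ∫ ω, hatZ n ω ^ (2 * m) ∂μ ≤ ∫ ω, Z n ω ^ (2 * m) ∂μ := by
    intro n
    induction n using Nat.strong_induction_on with
    | _ n ih =>
      intro hn
      rcases lt_or_ge n 2 with h2 | h2
      · obtain rfl : n = 1 := by omega
        rw [hhat1]
      · -- distributional facts
        have hnn : ((n - 1 : ℕ) : ℝ) ≠ 0 := by
          have : (1:ℕ) ≤ n - 1 := by omega
          positivity
        have hεU : IndepFun (ε n) (U n) μ :=
          hindep.indepFun (i := .inr (.inl n)) (j := .inr (.inr n)) (by simp)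
        have hμε : μ {ω | ε n ω = true} = ENNReal.ofReal p := hε n h2
        have hμk : ∀ k ∈ Finset.Icc 1 (n-1),
            μ {ω | ε n ω = true ∧ U n ω = k}
              = ENNReal.ofReal p * (((n - 1 : ℕ) : ℝ≥0∞))⁻¹ := by
          intro k hk
          have h := (indepFun_iff_measure_inter_preimage_eq_mul.1 hεU) {true} {k}
            (measurableSet_singleton _) (measurableSet_singleton _)
          have hset : {ω | ε n ω = true ∧ U n ω = k}
              = ε n ⁻¹' {true} ∩ U n ⁻¹' {k} := rfl
          rw [hset, h]
          have h1 : ε n ⁻¹' {true} = {ω | ε n ω = true} := rfl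
          have h2' : U n ⁻¹' {k} = {ω | U n ω = k} := rfl
          rw [h1, h2', hμε, hU n h2 k hk]
        -- independence of the k-th term
        have hIndep_k : ∀ k, 1 ≤ k → k ≤ n - 1 →
            IndepFun (fun ω => if ε n ω = true ∧ U n ω = k then (1:ℝ) else 0)
              (fun ω => hatZ k ω ^ (2 * m)) μ := by
          intro k hk1 hk2
          set mS : MeasurableSpace Ω :=
            ⨆ i ∈ ({.inr (.inl n), .inr (.inr n)} : Set (ℕ ⊕ (ℕ ⊕ ℕ))),
              (walkσ i).comap (walkFam Z ε U i) with hmS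
          have hdisj : Disjoint ({.inr (.inl n), .inr (.inr n)} : Set (ℕ ⊕ (ℕ ⊕ ℕ)))
              {i | widx i ≤ n - 1} := by
            rw [Set.disjoint_left]
            rintro i (rfl | rfl) hi <;> · simp only [widx, Set.mem_setOf_eq] at hi; omega
          have hS : Indep mS (mA (n-1)) μ :=
            indep_iSup_of_disjoint (fun i => (hFmeas i).comap_le) hiI hdisj
          have hεS : Measurable[mS] (ε n) := measurable_iff_comap_le.2
            (le_iSup₂ (f := fun i (_ : i ∈ ({.inr (.inl n), .inr (.inr n)} :
              Set (ℕ ⊕ (ℕ ⊕ ℕ)))) => (walkσ i).comap (walkFam Z ε U i))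
              (Sum.inr (Sum.inl n)) (Set.mem_insert _ _))
          have hUS : Measurable[mS] (U n) := measurable_iff_comap_le.2
            (le_iSup₂ (f := fun i (_ : i ∈ ({.inr (.inl n), .inr (.inr n)} :
              Set (ℕ ⊕ (ℕ ⊕ ℕ)))) => (walkσ i).comap (walkFam Z ε U i))
              (Sum.inr (Sum.inr n)) (Set.mem_insert_of_mem _ rfl))
          have hX : Measurable[mS]
              (fun ω => if ε n ω = true ∧ U n ω = k then (1:ℝ) else 0) := by
            have hset : MeasurableSet[mS] {ω | ε n ω = true ∧ U n ω = k} := by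
              have : {ω | ε n ω = true ∧ U n ω = k}
                  = ε n ⁻¹' {true} ∩ U n ⁻¹' {k} := rfl
              rw [this]
              exact (hεS (measurableSet_singleton _)).inter (hUS (measurableSet_singleton _))
            exact Measurable.ite hset measurable_const measurable_const
          have hY : Measurable[mA (n-1)] (fun ω => hatZ k ω ^ (2 * m)) :=
            ((hhatA k hk1).mono (hmA_mono hk2) le_rfl).pow_const _
          exact indep_of_indep_of_le_left
            (indep_of_indep_of_le_right hS (measurable_iff_comap_le.1 hY))
            (measurable_iff_comap_le.1 hX)
        -- independence of the first term
        have hIndep_0 : IndepFun (fun ω => if ε n ω = true then (0:ℝ) else 1)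
            (fun ω => Z n ω ^ (2 * m)) μ := by
          have h := hindep.indepFun (i := .inr (.inl n)) (j := .inl n) (by simp)
          exact h.comp (φ := fun b : Bool => if b = true then (0:ℝ) else 1)
            (ψ := fun x : ℝ => x ^ (2 * m)) (show Measurable (fun b : Bool => if b = true then (0:ℝ) else 1) from Measurable.of_discrete)
            (show Measurable (fun x : ℝ => x ^ (2 * m)) from measurable_id.pow_const _)
        -- pointwise decomposition
        have hdecomp : ∀ ω, hatZ n ω ^ (2 * m)
            = (if ε n ω = true then (0:ℝ) else 1) * Z n ω ^ (2 * m)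
              + ∑ k ∈ Finset.Icc 1 (n-1),
                  (if ε n ω = true ∧ U n ω = k then (1:ℝ) else 0) * hatZ k ω ^ (2 * m) := by
          intro ω
          rw [hhatrec n h2 ω]
          by_cases hb : ε n ω = true
          · simp only [hb, if_true, true_and, zero_mul, zero_add, ite_mul, one_mul]
            rw [Finset.sum_ite_eq]
            simp [hUrange n h2 ω]
          · simp [hb]
        -- integrability of the pieces
        have hInt0 : Integrable
            (fun ω => (if ε n ω = true then (0:ℝ) else 1) * Z n ω ^ (2 * m)) μ := by
          refine (hmom m n).bdd_mul (c := 1) ?_ (ae_of_all _ fun ω => ?_)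
          · exact (Measurable.ite ((hεmeas n) (measurableSet_singleton true))
              measurable_const measurable_const).aestronglyMeasurable
          · by_cases hb : ε n ω = true <;> simp [hb]
        have hIntk : ∀ k ∈ Finset.Icc 1 (n-1), Integrable
            (fun ω => (if ε n ω = true ∧ U n ω = k then (1:ℝ) else 0)
              * hatZ k ω ^ (2 * m)) μ := by
          intro k hk
          rw [Finset.mem_Icc] at hk
          refine (hIntHat k hk.1).bdd_mul (c := 1) ?_ (ae_of_all _ fun ω => ?_)
          · have hset : MeasurableSet {ω | ε n ω = true ∧ U n ω = k} := by
              have : {ω | ε n ω = true ∧ U n ω = k}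
                  = ε n ⁻¹' {true} ∩ U n ⁻¹' {k} := rfl
              rw [this]
              exact ((hεmeas n) (measurableSet_singleton _)).inter
                ((hUmeas n) (measurableSet_singleton _))
            exact (Measurable.ite hset measurable_const measurable_const).aestronglyMeasurable
          · by_cases hb : ε n ω = true ∧ U n ω = k <;> simp [hb]
        -- compute the integral
        have hsplit : ∫ ω, hatZ n ω ^ (2 * m) ∂μ
            = ∫ ω, (if ε n ω = true then (0:ℝ) else 1) * Z n ω ^ (2 * m) ∂μ
              + ∑ k ∈ Finset.Icc 1 (n-1), ∫ ω,
                  (if ε n ω = true ∧ U n ω = k then (1:ℝ) else 0)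
                    * hatZ k ω ^ (2 * m) ∂μ := by
          rw [integral_congr_ae (ae_of_all _ hdecomp),
            integral_add hInt0 (integrable_finset_sum _ hIntk),
            integral_finset_sum _ hIntk]
        -- value of the first integral
        have hfirst : ∫ ω, (if ε n ω = true then (0:ℝ) else 1) * Z n ω ^ (2 * m) ∂μ
            = (1 - p) * ∫ ω, Z n ω ^ (2 * m) ∂μ := by
          rw [show (fun ω => (if ε n ω = true then (0:ℝ) else 1) * Z n ω ^ (2 * m))
              = (fun ω => if ε n ω = true then (0:ℝ) else 1) * fun ω => Z n ω ^ (2 * m)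
              from rfl]
          rw [hIndep_0.integral_mul_eq_mul_integral
            ((Measurable.ite ((hεmeas n) (measurableSet_singleton true))
              measurable_const measurable_const).aestronglyMeasurable)
            (((hZmeas n).pow_const _).aestronglyMeasurable)]
          congr 1
          have hind : (fun ω => if ε n ω = true then (0:ℝ) else 1)
              = Set.indicator ({ω | ε n ω = true}ᶜ) (fun _ => (1:ℝ)) := by
            funext ω
            by_cases hb : ε n ω = true <;> simp [hb, Set.indicator]
          have hsetε : MeasurableSet {ω | ε n ω = true} :=
            (hεmeas n) (measurableSet_singleton true)
          rw [hind, integral_indicator_const (1:ℝ) hsetε.compl]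
          rw [measureReal_def, prob_compl_eq_one_sub hsetε, hμε]
          rw [smul_eq_mul, mul_one, ENNReal.toReal_sub_of_le
            (by simpa using ENNReal.ofReal_le_one.2 hp1.le) ENNReal.one_ne_top]
          simp [ENNReal.toReal_ofReal hp0.le]
        -- value of the k-th integral
        have hterm : ∀ k ∈ Finset.Icc 1 (n-1), ∫ ω,
            (if ε n ω = true ∧ U n ω = k then (1:ℝ) else 0) * hatZ k ω ^ (2 * m) ∂μ
            = (p / ((n - 1 : ℕ) : ℝ)) * ∫ ω, hatZ k ω ^ (2 * m) ∂μ := by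
          intro k hk
          rw [Finset.mem_Icc] at hk
          have hset : MeasurableSet {ω | ε n ω = true ∧ U n ω = k} :=
            ((hεmeas n) (measurableSet_singleton _)).inter
              ((hUmeas n) (measurableSet_singleton _))
          rw [show (fun ω => (if ε n ω = true ∧ U n ω = k then (1:ℝ) else 0)
              * hatZ k ω ^ (2 * m))
              = (fun ω => if ε n ω = true ∧ U n ω = k then (1:ℝ) else 0)
                * fun ω => hatZ k ω ^ (2 * m) from rfl]
          rw [(hIndep_k k hk.1 hk.2).integral_mul_eq_mul_integral
            (Measurable.ite hset measurable_const measurable_const).aestronglyMeasurable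
            (((hhatmeas k hk.1).pow_const _).aestronglyMeasurable)]
          congr 1
          have hind : (fun ω => if ε n ω = true ∧ U n ω = k then (1:ℝ) else 0)
              = Set.indicator {ω | ε n ω = true ∧ U n ω = k} (fun _ => (1:ℝ)) := by
            funext ω
            by_cases hb : ε n ω = true ∧ U n ω = k <;> simp [hb, Set.indicator]
          rw [hind, integral_indicator_const (1:ℝ) hset, smul_eq_mul, mul_one, measureReal_def,
            hμk k (Finset.mem_Icc.2 hk)]
          rw [ENNReal.toReal_mul, ENNReal.toReal_ofReal hp0.le, div_eq_mul_inv,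
            ENNReal.toReal_inv, ENNReal.toReal_natCast]
        -- put everything together
        have hEn0 : 0 ≤ ∫ ω, Z n ω ^ (2 * m) ∂μ :=
          integral_nonneg fun ω => hpow_nonneg _
        have hsum_le : ∑ k ∈ Finset.Icc 1 (n-1), ∫ ω,
            (if ε n ω = true ∧ U n ω = k then (1:ℝ) else 0) * hatZ k ω ^ (2 * m) ∂μ
            ≤ p * ∫ ω, Z n ω ^ (2 * m) ∂μ := by
          have hcard : (Finset.Icc 1 (n-1)).card = n - 1 := by
            rw [Nat.card_Icc]; omega
          calc ∑ k ∈ Finset.Icc 1 (n-1), ∫ ω,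
              (if ε n ω = true ∧ U n ω = k then (1:ℝ) else 0) * hatZ k ω ^ (2 * m) ∂μ
              ≤ ∑ k ∈ Finset.Icc 1 (n-1),
                (p / ((n - 1 : ℕ) : ℝ)) * ∫ ω, Z n ω ^ (2 * m) ∂μ := by
                refine Finset.sum_le_sum fun k hk => ?_
                rw [hterm k hk]
                have hk' := Finset.mem_Icc.1 hk
                refine mul_le_mul_of_nonneg_left ?_ (by positivity)
                exact (ih k (by omega) hk'.1).trans (hmono m k n (by omega))
            _ = p * ∫ ω, Z n ω ^ (2 * m) ∂μ := by
                rw [Finset.sum_const, hcard, nsmul_eq_mul,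
                  show ((n-1:ℕ):ℝ) * (p / ((n-1:ℕ):ℝ) * ∫ ω, Z n ω ^ (2 * m) ∂μ)
                    = (((n-1:ℕ):ℝ) / ((n-1:ℕ):ℝ)) * (p * ∫ ω, Z n ω ^ (2 * m) ∂μ) by ring,
                  div_self hnn, one_mul]
        rw [hsplit, hfirst]
        nlinarith [hsum_le, hEn0]
  -- conclusion
  intro n hn
  refine ⟨?_, main n hn⟩
  refine integral_congr_ae (ae_of_all _ fun ω => ?_)
  exact (habs_pow (habs n hn ω).1).symm
end

section
/- Let {a_n} and {b_n} be real sequences with a_{n+1} = ((n+x)/n) a_n + b_{n+1} for all n ≥ 1. If b_n = o(n^{−r}) for some r > 0, then a_n = o(n^{1−r}) if x < 1−r, a_n = o(n^x log n) if x = 1−r, and a_n = O(n^x) if x > 1−r. -/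
open Filter Finset
open scoped Topology

lemma aux_log_ge {t : ℝ} (ht : -1 < t) : t / (1 + t) ≤ Real.log (1 + t) := by
  have h1 : (0:ℝ) < 1 + t := by linarith
  have h2 : (0:ℝ) < (1 + t)⁻¹ := by positivity
  have := Real.log_le_sub_one_of_pos h2
  rw [Real.log_inv] at this
  have h3 : 1 - (1 + t)⁻¹ ≤ Real.log (1 + t) := by linarith
  have h4 : t / (1 + t) = 1 - (1 + t)⁻¹ := by field_simp; ring
  linarith

lemma aux_log_bound {t : ℝ} (ht : |t| ≤ 1/2) : |Real.log (1 + t) - t| ≤ 2 * t ^ 2 := by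
  obtain ⟨h1, h2⟩ := abs_le.mp ht
  have hpos : (0:ℝ) < 1 + t := by linarith
  have hle : Real.log (1 + t) ≤ t := by
    have := Real.log_le_sub_one_of_pos hpos; linarith
  have hge := aux_log_ge (by linarith : (-1:ℝ) < t)
  rw [abs_sub_comm, abs_of_nonneg (by linarith)]
  have key : t - t / (1 + t) = t ^ 2 / (1 + t) := by field_simp; ring
  have h5 : t ^ 2 / (1 + t) ≤ 2 * t ^ 2 := by
    rw [div_le_iff₀ hpos]; nlinarith [sq_nonneg t]
  linarith

lemma aux_telescope (f : ℕ → ℝ) {m n : ℕ} (h : m ≤ n) :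
    ∑ k ∈ Finset.Ico m n, (f (k + 1) - f k) = f n - f m := by
  rw [Finset.sum_Ico_eq_sub _ h, Finset.sum_range_sub, Finset.sum_range_sub]
  ring

lemma aux_sum_sq {m : ℕ} (hm : 1 ≤ m) (n : ℕ) :
    ∑ k ∈ Finset.Ico m n, (1:ℝ) / (k:ℝ) ^ 2 ≤ 2 := by
  rcases le_or_gt m n with h | h
  · have hb : ∀ k ∈ Finset.Ico m n, (1:ℝ) / (k:ℝ) ^ 2 ≤
        (fun j : ℕ => (-2) * (1 / (j:ℝ))) (k + 1) - (fun j : ℕ => (-2) * (1 / (j:ℝ))) k := by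
      intro k hk
      have hk1 : 1 ≤ k := le_trans hm (Finset.mem_Ico.mp hk).1
      have hk1' : (1:ℝ) ≤ (k:ℝ) := by exact_mod_cast hk1
      have hkpos : (0:ℝ) < k := by linarith
      simp only [Nat.cast_add, Nat.cast_one]
      have key : (-2) * (1 / ((k:ℝ) + 1)) - (-2) * (1 / (k:ℝ)) = 2 / ((k:ℝ) * ((k:ℝ) + 1)) := by
        field_simp; ring
      rw [key, div_le_div_iff₀ (by positivity) (by positivity)]
      nlinarith
    calc ∑ k ∈ Finset.Ico m n, (1:ℝ) / (k:ℝ) ^ 2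
        ≤ ∑ k ∈ Finset.Ico m n, ((fun j : ℕ => (-2) * (1 / (j:ℝ))) (k + 1)
            - (fun j : ℕ => (-2) * (1 / (j:ℝ))) k) := Finset.sum_le_sum hb
      _ = (-2) * (1 / (n:ℝ)) - (-2) * (1 / (m:ℝ)) := aux_telescope (fun j : ℕ => (-2) * (1 / (j:ℝ))) h
      _ ≤ 2 := by
          have hm' : (1:ℝ) ≤ (m:ℝ) := by exact_mod_cast hm
          have h1 : (0:ℝ) ≤ 1 / (n:ℝ) := by positivity
          have h2 : 1 / (m:ℝ) ≤ 1 := by rw [div_le_one (by linarith)]; linarith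
          nlinarith
  · rw [Finset.Ico_eq_empty (by omega)]; simp

lemma aux_avg (g w V : ℕ → ℝ) (hg : Tendsto g atTop (𝓝 0)) (hg0 : ∀ k, 0 ≤ g k)
    (hw : ∀ k, 0 ≤ w k) (hV : Tendsto V atTop atTop)
    (hwV : ∀ n, ∑ k ∈ Finset.range n, w k ≤ V n) :
    Tendsto (fun n => (∑ k ∈ Finset.range n, g k * w k) / V n) atTop (𝓝 0) := by
  rw [NormedAddCommGroup.tendsto_nhds_zero]
  intro ε hε
  obtain ⟨M, hM⟩ := Metric.tendsto_atTop.mp hg (ε / 2) (by positivity)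
  set C := ∑ k ∈ Finset.range M, g k * w k with hC
  have hC0 : 0 ≤ C := Finset.sum_nonneg fun k _ => mul_nonneg (hg0 k) (hw k)
  have hV' : ∀ᶠ n in atTop, max 1 (2 * C / ε) < V n := hV.eventually_gt_atTop _
  filter_upwards [hV', eventually_ge_atTop M] with n hVn hn
  have hV1 : (1:ℝ) < V n := lt_of_le_of_lt (le_max_left _ _) hVn
  have hVpos : (0:ℝ) < V n := by linarith
  have hCV : 2 * C / ε < V n := lt_of_le_of_lt (le_max_right _ _) hVn
  have hCV' : C < ε / 2 * V n := by
    rw [div_lt_iff₀ hε] at hCV; nlinarith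
  have hnonneg : 0 ≤ ∑ k ∈ Finset.range n, g k * w k :=
    Finset.sum_nonneg fun k _ => mul_nonneg (hg0 k) (hw k)
  have hsplit : ∑ k ∈ Finset.range M, g k * w k + ∑ k ∈ Finset.Ico M n, g k * w k
      = ∑ k ∈ Finset.range n, g k * w k := Finset.sum_range_add_sum_Ico _ hn
  have htail : ∑ k ∈ Finset.Ico M n, g k * w k ≤ ε / 2 * V n := by
    calc ∑ k ∈ Finset.Ico M n, g k * w k
        ≤ ∑ k ∈ Finset.Ico M n, ε / 2 * w k := by
          apply Finset.sum_le_sum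
          intro k hk
          have hkM := (Finset.mem_Ico.mp hk).1
          have := hM k hkM
          rw [Real.dist_eq, sub_zero] at this
          exact mul_le_mul_of_nonneg_right (le_of_lt (lt_of_le_of_lt (le_abs_self _) this)) (hw k)
      _ = ε / 2 * ∑ k ∈ Finset.Ico M n, w k := by rw [Finset.mul_sum]
      _ ≤ ε / 2 * ∑ k ∈ Finset.range n, w k := by
          apply mul_le_mul_of_nonneg_left _ (by positivity)
          apply Finset.sum_le_sum_of_subset_of_nonneg
          · rw [Finset.range_eq_Ico]; exact Finset.Ico_subset_Ico (Nat.zero_le _) le_rfl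
          · intro k _ _; exact hw k
      _ ≤ ε / 2 * V n := mul_le_mul_of_nonneg_left (hwV n) (by positivity)
  have hsum : ∑ k ∈ Finset.range n, g k * w k < ε * V n := by
    rw [← hsplit]; linarith
  rw [Real.norm_eq_abs, abs_of_nonneg (div_nonneg hnonneg hVpos.le), div_lt_iff₀ hVpos]
  linarith [hsum]

lemma aux_sum_rpow {s : ℝ} (hs : s < 1) (n : ℕ) :
    ∑ k ∈ Finset.range n, ((k:ℝ) + 1) ^ (-s) ≤ max 1 (1 / (1 - s)) * (n:ℝ) ^ (1 - s) := by
  have h1s : 0 < 1 - s := by linarith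
  set c := max 1 (1 / (1 - s)) with hc
  have hc1 : (1:ℝ) ≤ c := le_max_left _ _
  have hcs : 1 / (1 - s) ≤ c := le_max_right _ _
  have hb : ∀ k : ℕ, ((k:ℝ) + 1) ^ (-s) ≤
      c * ((fun j : ℕ => (j:ℝ) ^ (1 - s)) (k + 1) - (fun j : ℕ => (j:ℝ) ^ (1 - s)) k) := by
    intro k
    simp only [Nat.cast_add, Nat.cast_one]
    have hk1 : (0:ℝ) < (k:ℝ) + 1 := by positivity
    have hdiff0 : (0:ℝ) ≤ ((k:ℝ) + 1) ^ (1 - s) - (k:ℝ) ^ (1 - s) := by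
      have := Real.rpow_le_rpow (Nat.cast_nonneg k) (by linarith : (k:ℝ) ≤ (k:ℝ) + 1) h1s.le
      linarith
    rcases le_or_gt 0 s with hs0 | hs0
    · -- 0 ≤ s < 1 : Bernoulli
      have hber := rpow_one_add_le_one_add_mul_self
        (s := -(1 / ((k:ℝ) + 1))) (p := 1 - s)
        (by rw [neg_le, neg_neg]; rw [div_le_one hk1]; linarith) (by linarith) (by linarith)
      have heq : (1 + -(1 / ((k:ℝ) + 1))) = (k:ℝ) / ((k:ℝ) + 1) := by field_simp; ring
      rw [heq] at hber
      have hmul : ((k:ℝ) / ((k:ℝ) + 1)) ^ (1 - s) * ((k:ℝ) + 1) ^ (1 - s) = (k:ℝ) ^ (1 - s) := by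
        rw [Real.div_rpow (Nat.cast_nonneg k) hk1.le]
        field_simp
      have hstep : (k:ℝ) ^ (1 - s) ≤
          (1 + (1 - s) * -(1 / ((k:ℝ) + 1))) * ((k:ℝ) + 1) ^ (1 - s) := by
        rw [← hmul]
        exact mul_le_mul_of_nonneg_right hber (Real.rpow_nonneg hk1.le _)
      have hpow : ((k:ℝ) + 1) ^ (1 - s) / ((k:ℝ) + 1) = ((k:ℝ) + 1) ^ (-s) := by
        rw [← Real.rpow_sub_one (ne_of_gt hk1)]
        norm_num
      have hkey : (1 - s) * ((k:ℝ) + 1) ^ (-s) ≤ ((k:ℝ) + 1) ^ (1 - s) - (k:ℝ) ^ (1 - s) := by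
        have hexpand : (1 + (1 - s) * -(1 / ((k:ℝ) + 1))) * ((k:ℝ) + 1) ^ (1 - s)
            = ((k:ℝ) + 1) ^ (1 - s) - (1 - s) * (((k:ℝ) + 1) ^ (1 - s) / ((k:ℝ) + 1)) := by
          ring
        rw [hexpand, hpow] at hstep
        linarith
      calc ((k:ℝ) + 1) ^ (-s) = (1 / (1 - s)) * ((1 - s) * ((k:ℝ) + 1) ^ (-s)) := by
            field_simp
        _ ≤ (1 / (1 - s)) * (((k:ℝ) + 1) ^ (1 - s) - (k:ℝ) ^ (1 - s)) :=
            mul_le_mul_of_nonneg_left hkey (by positivity)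
        _ ≤ c * (((k:ℝ) + 1) ^ (1 - s) - (k:ℝ) ^ (1 - s)) :=
            mul_le_mul_of_nonneg_right hcs hdiff0
    · -- s < 0
      have hns : (0:ℝ) ≤ -s := by linarith
      have h1 : ((k:ℝ) + 1) ^ (1 - s) = ((k:ℝ) + 1) * ((k:ℝ) + 1) ^ (-s) := by
        rw [show (1 : ℝ) - s = 1 + -s by ring, Real.rpow_add hk1, Real.rpow_one]
      rcases Nat.eq_zero_or_pos k with rfl | hk
      · simp only [Nat.cast_zero, zero_add]
        rw [Real.zero_rpow (ne_of_gt h1s), Real.one_rpow]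
        rw [Real.one_rpow]
        nlinarith [Real.rpow_nonneg (le_of_lt (by norm_num : (0:ℝ) < 1)) (-s)]
      · have hkpos : (0:ℝ) < (k:ℝ) := by exact_mod_cast hk
        have h2 : (k:ℝ) ^ (1 - s) = (k:ℝ) * (k:ℝ) ^ (-s) := by
          rw [show (1 : ℝ) - s = 1 + -s by ring, Real.rpow_add hkpos, Real.rpow_one]
        have h3 : (k:ℝ) ^ (-s) ≤ ((k:ℝ) + 1) ^ (-s) :=
          Real.rpow_le_rpow hkpos.le (by linarith) hns
        have hkey : ((k:ℝ) + 1) ^ (-s) ≤ ((k:ℝ) + 1) ^ (1 - s) - (k:ℝ) ^ (1 - s) := by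
          rw [h1, h2]; nlinarith
        nlinarith
  calc ∑ k ∈ Finset.range n, ((k:ℝ) + 1) ^ (-s)
      ≤ ∑ k ∈ Finset.range n, c * ((fun j : ℕ => (j:ℝ) ^ (1 - s)) (k + 1)
          - (fun j : ℕ => (j:ℝ) ^ (1 - s)) k) := Finset.sum_le_sum fun k _ => hb k
    _ = c * ((n:ℝ) ^ (1 - s) - (0:ℝ) ^ (1 - s)) := by
        rw [← Finset.mul_sum, Finset.sum_range_sub (fun j : ℕ => (j:ℝ) ^ (1 - s))]
        norm_num
    _ = c * (n:ℝ) ^ (1 - s) := by rw [Real.zero_rpow (ne_of_gt h1s)]; ring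

lemma aux_sum_harmonic (n : ℕ) : ∑ k ∈ Finset.range n, ((k:ℝ) + 1)⁻¹ ≤ 1 + Real.log n := by
  rcases Nat.eq_zero_or_pos n with rfl | hn
  · simp
  · have hsplit : ∑ k ∈ Finset.range 1, ((k:ℝ) + 1)⁻¹ + ∑ k ∈ Finset.Ico 1 n, ((k:ℝ) + 1)⁻¹
        = ∑ k ∈ Finset.range n, ((k:ℝ) + 1)⁻¹ := Finset.sum_range_add_sum_Ico _ hn
    have hb : ∀ k ∈ Finset.Ico 1 n, ((k:ℝ) + 1)⁻¹ ≤
        (fun j : ℕ => Real.log (j:ℝ)) (k + 1) - (fun j : ℕ => Real.log (j:ℝ)) k := by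
      intro k hk
      have hk1 : 1 ≤ k := (Finset.mem_Ico.mp hk).1
      have hkpos : (0:ℝ) < (k:ℝ) := by exact_mod_cast hk1
      simp only [Nat.cast_add, Nat.cast_one]
      have hlogdiv : Real.log ((k:ℝ) + 1) - Real.log (k:ℝ) = Real.log (1 + 1 / (k:ℝ)) := by
        rw [← Real.log_div (by positivity) (ne_of_gt hkpos)]
        congr 1
        field_simp
      have hge := aux_log_ge (t := 1 / (k:ℝ))
        (by have h00 : (0:ℝ) < 1 / (k:ℝ) := by positivity
            linarith)
      have heq : (1 / (k:ℝ)) / (1 + 1 / (k:ℝ)) = ((k:ℝ) + 1)⁻¹ := by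
        field_simp
      rw [hlogdiv, ← heq]
      exact hge
    have htail : ∑ k ∈ Finset.Ico 1 n, ((k:ℝ) + 1)⁻¹ ≤ Real.log n := by
      calc ∑ k ∈ Finset.Ico 1 n, ((k:ℝ) + 1)⁻¹
          ≤ ∑ k ∈ Finset.Ico 1 n, ((fun j : ℕ => Real.log (j:ℝ)) (k + 1)
              - (fun j : ℕ => Real.log (j:ℝ)) k) := Finset.sum_le_sum hb
        _ = (fun j : ℕ => Real.log (j:ℝ)) n - (fun j : ℕ => Real.log (j:ℝ)) 1 :=
            aux_telescope (fun j : ℕ => Real.log (j:ℝ)) hn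
        _ = Real.log n := by norm_num
    have h0 : ∑ k ∈ Finset.range 1, ((k:ℝ) + 1)⁻¹ = 1 := by norm_num
    linarith [hsplit, htail, h0]

set_option maxHeartbeats 1000000 in
/-- Asymptotics of the recursion `a_{n+1} = ((n+x)/n) a_n + b_{n+1}` when `b_n = o(n^{-r})`
for some `r > 0`: `a_n = o(n^{1-r})` if `x < 1-r`, `a_n = o(n^x log n)` if `x = 1-r`,
and `a_n = O(n^x)` if `x > 1-r`. -/
theorem recursion_asymptotics_of_littleO
    (a b' : ℕ → ℝ) (x r : ℝ) (hr : 0 < r)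
    (hrec : ∀ n : ℕ, 1 ≤ n → a (n + 1) = ((n + x) / n) * a n + b' (n + 1))
    (hb : Tendsto (fun n : ℕ => b' n * (n : ℝ) ^ r) atTop (𝓝 0)) :
    (x < 1 - r → Tendsto (fun n : ℕ => a n / (n : ℝ) ^ (1 - r)) atTop (𝓝 0)) ∧
    (x = 1 - r → Tendsto (fun n : ℕ => a n / ((n : ℝ) ^ x * Real.log n)) atTop (𝓝 0)) ∧
    (1 - r < x → ∃ C : ℝ, ∀ n : ℕ, 1 ≤ n → |a n| ≤ C * (n : ℝ) ^ x) := by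
  set N0 : ℕ := 2 * ⌈|x|⌉₊ + 2 with hN0def
  have hN0x : 2 * |x| + 2 ≤ (N0:ℝ) := by
    have h := Nat.le_ceil |x|
    have h2 : ((2 * ⌈|x|⌉₊ + 2 : ℕ) : ℝ) = 2 * (⌈|x|⌉₊ : ℝ) + 2 := by push_cast; ring
    rw [hN0def, h2]; linarith
  have hN2 : 2 ≤ N0 := by omega
  have habs0 : (0:ℝ) ≤ |x| := abs_nonneg x
  have hfac : ∀ k : ℕ, N0 ≤ k → 0 < ((k:ℝ) + x) / k := by
    intro k hk
    have hk' : 2 * |x| + 2 ≤ (k:ℝ) := le_trans hN0x (by exact_mod_cast hk)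
    have hx1 : -|x| ≤ x := neg_abs_le x
    apply div_pos (by linarith) (by linarith)
  set P : ℕ → ℝ := fun n => ∏ k ∈ Finset.Ico N0 n, (((k:ℝ) + x) / k) with hPdef
  have hPpos : ∀ n, 0 < P n := by
    intro n
    apply Finset.prod_pos
    intro k hk
    exact hfac k (Finset.mem_Ico.mp hk).1
  set S : ℕ → ℝ := fun n => ∑ k ∈ Finset.Ico N0 n, b' (k + 1) / P (k + 1) with hSdef
  have key : ∀ n, N0 ≤ n → a n = P n * (a N0 + S n) := by
    intro n hn
    induction n, hn using Nat.le_induction with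
    | base => simp [hPdef, hSdef]
    | succ n hn ih =>
      have h1n : 1 ≤ n := by omega
      have hP1 : P (n + 1) = P n * (((n:ℝ) + x) / n) := by
        rw [hPdef]; exact Finset.prod_Ico_succ_top hn _
      have hS1 : S (n + 1) = S n + b' (n + 1) / P (n + 1) := by
        rw [hSdef]; exact Finset.sum_Ico_succ_top hn _
      have hPne : P (n + 1) ≠ 0 := (hPpos _).ne'
      rw [hrec n h1n, ih, hS1]
      have expand : P (n + 1) * (a N0 + (S n + b' (n + 1) / P (n + 1)))
          = P (n + 1) * (a N0 + S n) + P (n + 1) * (b' (n + 1) / P (n + 1)) := by ring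
      rw [expand, mul_div_cancel₀ _ hPne, hP1]
      ring
  set Cst : ℝ := (2 * x ^ 2 + 2 * |x|) * 2 + |x| * Real.log N0 with hCstdef
  have hlogN0 : 0 ≤ Real.log N0 := Real.log_nonneg (by exact_mod_cast Nat.one_le_iff_ne_zero.mpr (by omega))
  have hCst0 : 0 ≤ Cst := by positivity
  have hlogP : ∀ n, N0 ≤ n → |Real.log (P n) - x * Real.log n| ≤ Cst := by
    intro n hn
    have hlogprod : Real.log (P n) = ∑ k ∈ Finset.Ico N0 n, Real.log (((k:ℝ) + x) / k) := by
      rw [hPdef]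
      exact Real.log_prod (fun k hk => (hfac k (Finset.mem_Ico.mp hk).1).ne')
    have htel : ∑ k ∈ Finset.Ico N0 n, ((fun j : ℕ => Real.log (j:ℝ)) (k + 1)
        - (fun j : ℕ => Real.log (j:ℝ)) k) = Real.log (n:ℝ) - Real.log (N0:ℝ) :=
      aux_telescope (fun j : ℕ => Real.log (j:ℝ)) hn
    have hterm : ∀ k ∈ Finset.Ico N0 n,
        |Real.log (((k:ℝ) + x) / k) - x * ((fun j : ℕ => Real.log (j:ℝ)) (k + 1)
          - (fun j : ℕ => Real.log (j:ℝ)) k)| ≤ (2 * x ^ 2 + 2 * |x|) * (1 / (k:ℝ) ^ 2) := by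
      intro k hk
      have hkN : N0 ≤ k := (Finset.mem_Ico.mp hk).1
      have hk' : 2 * |x| + 2 ≤ (k:ℝ) := le_trans hN0x (by exact_mod_cast hkN)
      have hkpos : (0:ℝ) < (k:ℝ) := by linarith
      have hkne : (k:ℝ) ≠ 0 := hkpos.ne'
      have heq1 : ((k:ℝ) + x) / k = 1 + x / k := by field_simp
      have heq2 : (fun j : ℕ => Real.log (j:ℝ)) (k + 1) - (fun j : ℕ => Real.log (j:ℝ)) k
          = Real.log (1 + 1 / (k:ℝ)) := by
        simp only [Nat.cast_add, Nat.cast_one]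
        rw [← Real.log_div (by positivity) hkne]
        congr 1
        field_simp
      have hb1 : |Real.log (1 + x / k) - x / k| ≤ 2 * (x / k) ^ 2 := by
        apply aux_log_bound
        rw [abs_div, abs_of_pos hkpos, div_le_iff₀ hkpos]
        linarith
      have hb2 : |Real.log (1 + 1 / (k:ℝ)) - 1 / k| ≤ 2 * (1 / (k:ℝ)) ^ 2 := by
        apply aux_log_bound
        rw [abs_of_pos (by positivity : (0:ℝ) < 1 / (k:ℝ)), div_le_div_iff₀ hkpos (by norm_num)]
        linarith
      rw [heq1, heq2]
      have hdecomp : Real.log (1 + x / k) - x * Real.log (1 + 1 / (k:ℝ))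
          = (Real.log (1 + x / k) - x / k) - x * (Real.log (1 + 1 / (k:ℝ)) - 1 / k) := by
        ring
      rw [hdecomp]
      calc |(Real.log (1 + x / k) - x / k) - x * (Real.log (1 + 1 / (k:ℝ)) - 1 / k)|
          ≤ |Real.log (1 + x / k) - x / k| + |x * (Real.log (1 + 1 / (k:ℝ)) - 1 / k)| :=
            abs_sub _ _
        _ ≤ 2 * (x / k) ^ 2 + |x| * (2 * (1 / (k:ℝ)) ^ 2) := by
            rw [abs_mul]
            exact add_le_add hb1 (mul_le_mul_of_nonneg_left hb2 habs0)
        _ = (2 * x ^ 2 + 2 * |x|) * (1 / (k:ℝ) ^ 2) := by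
            rw [div_pow, div_pow]
            have : |x| * (2 * (1 / (k:ℝ) ^ 2)) = 2 * |x| / (k:ℝ) ^ 2 := by ring
            field_simp
    have hdecomp2 : Real.log (P n) - x * Real.log (n:ℝ)
        = (∑ k ∈ Finset.Ico N0 n, (Real.log (((k:ℝ) + x) / k)
            - x * ((fun j : ℕ => Real.log (j:ℝ)) (k + 1) - (fun j : ℕ => Real.log (j:ℝ)) k)))
          - x * Real.log (N0:ℝ) := by
      rw [hlogprod, Finset.sum_sub_distrib, ← Finset.mul_sum, htel]
      ring
    rw [hdecomp2]
    calc |(∑ k ∈ Finset.Ico N0 n, (Real.log (((k:ℝ) + x) / k)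
            - x * ((fun j : ℕ => Real.log (j:ℝ)) (k + 1) - (fun j : ℕ => Real.log (j:ℝ)) k)))
          - x * Real.log (N0:ℝ)|
        ≤ |∑ k ∈ Finset.Ico N0 n, (Real.log (((k:ℝ) + x) / k)
            - x * ((fun j : ℕ => Real.log (j:ℝ)) (k + 1) - (fun j : ℕ => Real.log (j:ℝ)) k))|
          + |x * Real.log (N0:ℝ)| := abs_sub _ _
      _ ≤ (2 * x ^ 2 + 2 * |x|) * 2 + |x| * Real.log N0 := by
          apply add_le_add
          · calc |∑ k ∈ Finset.Ico N0 n, _|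
                ≤ ∑ k ∈ Finset.Ico N0 n, |Real.log (((k:ℝ) + x) / k)
                  - x * ((fun j : ℕ => Real.log (j:ℝ)) (k + 1)
                    - (fun j : ℕ => Real.log (j:ℝ)) k)| := Finset.abs_sum_le_sum_abs _ _
              _ ≤ ∑ k ∈ Finset.Ico N0 n, (2 * x ^ 2 + 2 * |x|) * (1 / (k:ℝ) ^ 2) :=
                  Finset.sum_le_sum hterm
              _ = (2 * x ^ 2 + 2 * |x|) * ∑ k ∈ Finset.Ico N0 n, (1:ℝ) / (k:ℝ) ^ 2 := by
                  rw [Finset.mul_sum]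
              _ ≤ (2 * x ^ 2 + 2 * |x|) * 2 := by
                  apply mul_le_mul_of_nonneg_left (aux_sum_sq (by omega) n) (by positivity)
          · rw [abs_mul, abs_of_nonneg hlogN0]
      _ = Cst := by rw [hCstdef]
  have hPub : ∀ n, N0 ≤ n → P n ≤ Real.exp Cst * (n:ℝ) ^ x := by
    intro n hn
    have hnpos : (0:ℝ) < (n:ℝ) := by
      have : 0 < n := by omega
      exact_mod_cast this
    have h1 : Real.log (P n) ≤ Cst + x * Real.log n := by
      have := abs_le.mp (hlogP n hn); linarith [this.2]
    calc P n = Real.exp (Real.log (P n)) := (Real.exp_log (hPpos n)).symm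
      _ ≤ Real.exp (Cst + x * Real.log n) := Real.exp_le_exp.mpr h1
      _ = Real.exp Cst * (n:ℝ) ^ x := by
          rw [Real.exp_add, Real.rpow_def_of_pos hnpos, mul_comm (Real.log (n:ℝ)) x]
  have hPinv : ∀ k, N0 ≤ k → 1 / P k ≤ Real.exp Cst * (k:ℝ) ^ (-x) := by
    intro k hk
    have hkpos : (0:ℝ) < (k:ℝ) := by
      have : 0 < k := by omega
      exact_mod_cast this
    have h1 : x * Real.log k - Cst ≤ Real.log (P k) := by
      have := abs_le.mp (hlogP k hk); linarith [this.1]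
    calc 1 / P k = Real.exp (-(Real.log (P k))) := by
          rw [Real.exp_neg, Real.exp_log (hPpos k), one_div]
      _ ≤ Real.exp (Cst + (-x) * Real.log k) := by
          apply Real.exp_le_exp.mpr; linarith
      _ = Real.exp Cst * (k:ℝ) ^ (-x) := by
          rw [Real.exp_add, Real.rpow_def_of_pos hkpos, mul_comm (Real.log (k:ℝ)) (-x)]
  set g : ℕ → ℝ := fun k => Real.exp Cst * |b' (k + 1) * (((k + 1 : ℕ)):ℝ) ^ r| with hgdef
  set w : ℕ → ℝ := fun k => (((k + 1 : ℕ)):ℝ) ^ (-(r + x)) with hwdef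
  have hg0 : ∀ k, 0 ≤ g k := fun k => mul_nonneg (Real.exp_nonneg _) (abs_nonneg _)
  have hw0 : ∀ k, 0 ≤ w k := fun k => Real.rpow_nonneg (Nat.cast_nonneg _) _
  have hgt : Tendsto g atTop (𝓝 0) := by
    have h1 : Tendsto (fun k : ℕ => b' (k + 1) * (((k + 1 : ℕ)):ℝ) ^ r) atTop (𝓝 0) :=
      hb.comp (tendsto_add_atTop_nat 1)
    have h2 := (h1.abs).const_mul (Real.exp Cst)
    rw [abs_zero, mul_zero] at h2
    exact h2
  have hterm2 : ∀ k, N0 ≤ k → |b' (k + 1) / P (k + 1)| ≤ g k * w k := by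
    intro k hk
    have hk1 : (0:ℝ) < (((k + 1 : ℕ)):ℝ) := by positivity
    have hinv := hPinv (k + 1) (by omega)
    calc |b' (k + 1) / P (k + 1)| = |b' (k + 1)| * (1 / P (k + 1)) := by
          rw [abs_div, abs_of_pos (hPpos _)]
          ring
      _ ≤ |b' (k + 1)| * (Real.exp Cst * (((k + 1 : ℕ)):ℝ) ^ (-x)) :=
          mul_le_mul_of_nonneg_left hinv (abs_nonneg _)
      _ = g k * w k := by
          rw [hgdef, hwdef]
          simp only
          rw [abs_mul, abs_of_nonneg (Real.rpow_nonneg (Nat.cast_nonneg _) r)]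
          rw [mul_assoc (Real.exp Cst), mul_assoc (|b' (k + 1)|), ← Real.rpow_add hk1]
          rw [show r + -(r + x) = -x by ring]
          ring
  have hSle : ∀ n, |S n| ≤ ∑ k ∈ Finset.range n, g k * w k := by
    intro n
    calc |S n| ≤ ∑ k ∈ Finset.Ico N0 n, |b' (k + 1) / P (k + 1)| := by
          rw [hSdef]; exact Finset.abs_sum_le_sum_abs _ _
      _ ≤ ∑ k ∈ Finset.Ico N0 n, g k * w k :=
          Finset.sum_le_sum (fun k hk => hterm2 k (Finset.mem_Ico.mp hk).1)
      _ ≤ ∑ k ∈ Finset.range n, g k * w k := by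
          apply Finset.sum_le_sum_of_subset_of_nonneg
          · rw [Finset.range_eq_Ico]
            exact Finset.Ico_subset_Ico (Nat.zero_le _) le_rfl
          · intro k _ _
            exact mul_nonneg (hg0 k) (hw0 k)
  refine ⟨?_, ?_, ?_⟩
  · -- case x < 1 - r
    intro hx
    have hs : r + x < 1 := by linarith
    have h1s : 0 < 1 - (r + x) := by linarith
    set c := max 1 (1 / (1 - (r + x))) with hcdef
    have hc0 : (0:ℝ) < c := lt_of_lt_of_le one_pos (le_max_left _ _)
    set V : ℕ → ℝ := fun n => c * (n:ℝ) ^ (1 - (r + x)) with hVdef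
    have hVt : Tendsto V atTop atTop := by
      have h1 : Tendsto (fun u : ℝ => u ^ (1 - (r + x))) atTop atTop := tendsto_rpow_atTop h1s
      have h2 : Tendsto (fun n : ℕ => ((n:ℝ)) ^ (1 - (r + x))) atTop atTop :=
        h1.comp tendsto_natCast_atTop_atTop
      exact h2.const_mul_atTop hc0
    have hwV : ∀ n, ∑ k ∈ Finset.range n, w k ≤ V n := by
      intro n
      have h1 := aux_sum_rpow hs n
      have h2 : ∑ k ∈ Finset.range n, w k = ∑ k ∈ Finset.range n, ((k:ℝ) + 1) ^ (-(r + x)) := by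
        apply Finset.sum_congr rfl
        intro k _
        show (((k + 1 : ℕ)):ℝ) ^ (-(r + x)) = ((k:ℝ) + 1) ^ (-(r + x))
        norm_num
      rw [h2]
      exact h1
    have hT := aux_avg g w V hgt hg0 hw0 hVt hwV
    set T : ℕ → ℝ := fun n => (∑ k ∈ Finset.range n, g k * w k) / V n with hTdef
    set E := Real.exp Cst with hEdef
    have hE0 : (0:ℝ) < E := Real.exp_pos _
    have hR : Tendsto (fun n : ℕ => E * |a N0| * (n:ℝ) ^ (r + x - 1) + E * c * T n)
        atTop (𝓝 0) := by
      have h1 : Tendsto (fun n : ℕ => (n:ℝ) ^ (r + x - 1)) atTop (𝓝 0) := by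
        have h2 := (tendsto_rpow_neg_atTop h1s).comp tendsto_natCast_atTop_atTop
        have h3 : (fun n : ℕ => ((n:ℝ)) ^ (-(1 - (r + x))))
            = fun n : ℕ => (n:ℝ) ^ (r + x - 1) := by
          funext n; congr 1; ring
        rw [← h3]
        exact h2
      have h4 := (h1.const_mul (E * |a N0|)).add (hT.const_mul (E * c))
      simpa using h4
    apply squeeze_zero_norm' _ hR
    filter_upwards [eventually_ge_atTop N0] with n hn
    have hn1 : 1 ≤ n := by omega
    have hnpos : (0:ℝ) < (n:ℝ) := by
      have : 0 < n := by omega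
      exact_mod_cast this
    have hVpos : 0 < V n := mul_pos hc0 (Real.rpow_pos_of_pos hnpos _)
    have hsum0 : 0 ≤ ∑ k ∈ Finset.range n, g k * w k :=
      Finset.sum_nonneg fun k _ => mul_nonneg (hg0 k) (hw0 k)
    have hT0 : 0 ≤ T n := div_nonneg hsum0 hVpos.le
    have hTV : |S n| ≤ T n * V n := by
      have h5 := hSle n
      have h6 : T n * V n = ∑ k ∈ Finset.range n, g k * w k :=
        div_mul_cancel₀ _ hVpos.ne'
      rw [h6]
      exact h5
    have hden : (0:ℝ) < (n:ℝ) ^ (1 - r) := Real.rpow_pos_of_pos hnpos _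
    rw [Real.norm_eq_abs, abs_div, abs_of_pos hden, div_le_iff₀ hden]
    have hW0 : 0 ≤ |a N0| + T n * V n :=
      add_nonneg (abs_nonneg _) (mul_nonneg hT0 hVpos.le)
    calc |a n| ≤ E * (n:ℝ) ^ x * (|a N0| + T n * V n) := by
          rw [key n hn, abs_mul, abs_of_pos (hPpos n)]
          calc P n * |a N0 + S n| ≤ P n * (|a N0| + T n * V n) :=
                mul_le_mul_of_nonneg_left (le_trans (abs_add_le _ _) (by linarith)) (hPpos n).le
            _ ≤ (E * (n:ℝ) ^ x) * (|a N0| + T n * V n) :=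
                mul_le_mul_of_nonneg_right (hPub n hn) hW0
      _ = (E * |a N0| * (n:ℝ) ^ (r + x - 1) + E * c * T n) * (n:ℝ) ^ (1 - r) := by
          have e1 : (n:ℝ) ^ (r + x - 1) * (n:ℝ) ^ (1 - r) = (n:ℝ) ^ x := by
            rw [← Real.rpow_add hnpos, show r + x - 1 + (1 - r) = x by ring]
          have e2 : (n:ℝ) ^ x * (n:ℝ) ^ (1 - (r + x)) = (n:ℝ) ^ (1 - r) := by
            rw [← Real.rpow_add hnpos, show x + (1 - (r + x)) = 1 - r by ring]
          have hVn : V n = c * (n:ℝ) ^ (1 - (r + x)) := rfl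
          rw [hVn]
          linear_combination (-(E * |a N0|)) * e1 + E * T n * c * e2
  · -- case x = 1 - r
    intro hx
    have hs : r + x = 1 := by rw [hx]; ring
    set V : ℕ → ℝ := fun n => 1 + Real.log n with hVdef
    have hVt : Tendsto V atTop atTop := by
      have h1 : Tendsto (fun n : ℕ => Real.log (n:ℝ)) atTop atTop :=
        Real.tendsto_log_atTop.comp tendsto_natCast_atTop_atTop
      exact tendsto_atTop_add_const_left _ 1 h1
    have hwV : ∀ n, ∑ k ∈ Finset.range n, w k ≤ V n := by
      intro n
      have h1 := aux_sum_harmonic n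
      have h2 : ∑ k ∈ Finset.range n, w k = ∑ k ∈ Finset.range n, ((k:ℝ) + 1)⁻¹ := by
        apply Finset.sum_congr rfl
        intro k _
        show (((k + 1 : ℕ)):ℝ) ^ (-(r + x)) = ((k:ℝ) + 1)⁻¹
        rw [hs, Real.rpow_neg_one]
        norm_num
      rw [h2]
      exact h1
    have hT := aux_avg g w V hgt hg0 hw0 hVt hwV
    set T : ℕ → ℝ := fun n => (∑ k ∈ Finset.range n, g k * w k) / V n with hTdef
    set E := Real.exp Cst with hEdef
    have hE0 : (0:ℝ) < E := Real.exp_pos _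
    have hR : Tendsto (fun n : ℕ => E * |a N0| * (Real.log (n:ℝ))⁻¹ + 2 * E * T n)
        atTop (𝓝 0) := by
      have h1 : Tendsto (fun n : ℕ => (Real.log (n:ℝ))⁻¹) atTop (𝓝 0) :=
        (Real.tendsto_log_atTop.comp tendsto_natCast_atTop_atTop).inv_tendsto_atTop
      have h4 := (h1.const_mul (E * |a N0|)).add (hT.const_mul (2 * E))
      simpa using h4
    apply squeeze_zero_norm' _ hR
    filter_upwards [eventually_ge_atTop N0, eventually_ge_atTop 3] with n hn hn3
    have hnpos : (0:ℝ) < (n:ℝ) := by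
      have : 0 < n := by omega
      exact_mod_cast this
    have hlog1 : (1:ℝ) ≤ Real.log n := by
      rw [Real.le_log_iff_exp_le hnpos]
      have h5 := Real.exp_one_lt_d9
      have h6 : (3:ℝ) ≤ (n:ℝ) := by exact_mod_cast hn3
      linarith
    have hlogpos : (0:ℝ) < Real.log n := by linarith
    have hVpos : 0 < V n := by
      have hVn : V n = 1 + Real.log n := rfl
      rw [hVn]; linarith
    have hsum0 : 0 ≤ ∑ k ∈ Finset.range n, g k * w k :=
      Finset.sum_nonneg fun k _ => mul_nonneg (hg0 k) (hw0 k)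
    have hT0 : 0 ≤ T n := div_nonneg hsum0 hVpos.le
    have hTV : |S n| ≤ T n * V n := by
      have h5 := hSle n
      have h6 : T n * V n = ∑ k ∈ Finset.range n, g k * w k :=
        div_mul_cancel₀ _ hVpos.ne'
      rw [h6]
      exact h5
    have hnx : (0:ℝ) < (n:ℝ) ^ x := Real.rpow_pos_of_pos hnpos _
    have hden : (0:ℝ) < (n:ℝ) ^ x * Real.log n := mul_pos hnx hlogpos
    rw [Real.norm_eq_abs, abs_div, abs_of_pos hden, div_le_iff₀ hden]
    have hW0 : 0 ≤ |a N0| + T n * V n :=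
      add_nonneg (abs_nonneg _) (mul_nonneg hT0 hVpos.le)
    calc |a n| ≤ E * (n:ℝ) ^ x * (|a N0| + T n * V n) := by
          rw [key n hn, abs_mul, abs_of_pos (hPpos n)]
          calc P n * |a N0 + S n| ≤ P n * (|a N0| + T n * V n) :=
                mul_le_mul_of_nonneg_left (le_trans (abs_add_le _ _) (by linarith)) (hPpos n).le
            _ ≤ (E * (n:ℝ) ^ x) * (|a N0| + T n * V n) :=
                mul_le_mul_of_nonneg_right (hPub n hn) hW0
      _ ≤ (E * |a N0| * (Real.log (n:ℝ))⁻¹ + 2 * E * T n) * ((n:ℝ) ^ x * Real.log n) := by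
          have hVle : V n ≤ 2 * Real.log n := by
            have hVn : V n = 1 + Real.log n := rfl
            rw [hVn]; linarith
          have expand : (E * |a N0| * (Real.log (n:ℝ))⁻¹ + 2 * E * T n) * ((n:ℝ) ^ x * Real.log n)
              = E * |a N0| * (n:ℝ) ^ x * ((Real.log (n:ℝ))⁻¹ * Real.log n)
                + 2 * E * T n * (n:ℝ) ^ x * Real.log n := by ring
          rw [expand, inv_mul_cancel₀ hlogpos.ne']
          have h7 : T n * V n ≤ T n * (2 * Real.log n) :=
            mul_le_mul_of_nonneg_left hVle hT0
          have h8 : E * (n:ℝ) ^ x * (T n * V n) ≤ E * (n:ℝ) ^ x * (T n * (2 * Real.log n)) :=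
            mul_le_mul_of_nonneg_left h7 (by positivity)
          nlinarith [h8]
  · -- case 1 - r < x
    intro hx
    have hs1 : 1 < r + x := by linarith
    have hsummable : Summable w := by
      have h0 : Summable (fun n : ℕ => 1 / (n:ℝ) ^ (r + x)) :=
        Real.summable_one_div_nat_rpow.mpr hs1
      have h1 : Summable (fun k : ℕ => 1 / (((k + 1 : ℕ)):ℝ) ^ (r + x)) :=
        (summable_nat_add_iff (f := fun n : ℕ => 1 / (n:ℝ) ^ (r + x)) 1).mpr h0
      apply h1.congr
      intro k
      rw [hwdef]
      simp only
      rw [Real.rpow_neg (Nat.cast_nonneg _), one_div]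
    obtain ⟨G, hG⟩ := hgt.bddAbove_range
    have hG' : ∀ k, g k ≤ G := fun k => hG (Set.mem_range_self k)
    have hG0 : 0 ≤ G := le_trans (hg0 0) (hG' 0)
    set B := G * ∑' k, w k with hBdef
    have hSB : ∀ n, |S n| ≤ B := by
      intro n
      refine le_trans (hSle n) ?_
      calc ∑ k ∈ Finset.range n, g k * w k
          ≤ ∑ k ∈ Finset.range n, G * w k :=
            Finset.sum_le_sum (fun k _ => mul_le_mul_of_nonneg_right (hG' k) (hw0 k))
        _ = G * ∑ k ∈ Finset.range n, w k := by rw [Finset.mul_sum]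
        _ ≤ B := mul_le_mul_of_nonneg_left
            (Summable.sum_le_tsum _ (fun k _ => hw0 k) hsummable) hG0
    have hB0 : 0 ≤ B := le_trans (abs_nonneg _) (hSB N0)
    set A := Real.exp Cst * (|a N0| + B) with hAdef
    have hA0 : 0 ≤ A := by positivity
    set D := ∑ m ∈ Finset.range N0, |a m| * (m:ℝ) ^ (-x) with hDdef
    have hD0 : 0 ≤ D :=
      Finset.sum_nonneg fun m _ => mul_nonneg (abs_nonneg _) (Real.rpow_nonneg (Nat.cast_nonneg _) _)
    refine ⟨A + D, ?_⟩
    intro n hn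
    have hnpos : (0:ℝ) < (n:ℝ) := by exact_mod_cast hn
    have hnx : (0:ℝ) < (n:ℝ) ^ x := Real.rpow_pos_of_pos hnpos x
    rcases le_or_gt N0 n with hnN | hnN
    · have h1 : |a n| ≤ A * (n:ℝ) ^ x := by
        rw [key n hnN, abs_mul, abs_of_pos (hPpos n)]
        calc P n * |a N0 + S n| ≤ P n * (|a N0| + B) := by
              apply mul_le_mul_of_nonneg_left _ (hPpos n).le
              exact le_trans (abs_add_le _ _) (by linarith [hSB n])
          _ ≤ (Real.exp Cst * (n:ℝ) ^ x) * (|a N0| + B) :=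
              mul_le_mul_of_nonneg_right (hPub n hnN) (by positivity)
          _ = A * (n:ℝ) ^ x := by rw [hAdef]; ring
      nlinarith
    · have h1 : |a n| * (n:ℝ) ^ (-x) ≤ D := by
        rw [hDdef]
        exact Finset.single_le_sum
          (f := fun m : ℕ => |a m| * (m:ℝ) ^ (-x))
          (fun m _ => mul_nonneg (abs_nonneg _) (Real.rpow_nonneg (Nat.cast_nonneg _) _))
          (Finset.mem_range.mpr hnN)
      have h2 : |a n| = |a n| * (n:ℝ) ^ (-x) * (n:ℝ) ^ x := by
        rw [mul_assoc, ← Real.rpow_add hnpos]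
        norm_num
      rw [h2]
      have h3 : |a n| * (n:ℝ) ^ (-x) * (n:ℝ) ^ x ≤ D * (n:ℝ) ^ x :=
        mul_le_mul_of_nonneg_right h1 hnx.le
      nlinarith
end

section
/- For fixed j, the expected number of occurrences of X_j among the first n reinforced steps satisfies E[N_j(n)] = (1−p)Γ(j)Γ(n+p)/(Γ(n)Γ(j+p)) ∼ (1−p)Γ(j)/Γ(j+p) · n^p as n → ∞. -/
open MeasureTheory ProbabilityTheory Filter
open scoped Topology

private lemma gamma_prod (p : ℝ) (hp : 0 < p) (n : ℕ) :
    Real.Gamma (p + n) = Real.Gamma p * ∏ i ∈ Finset.range n, (p + i) := by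
  induction n with
  | zero => simp
  | succ n ih =>
    have hne : p + (n : ℝ) ≠ 0 := by positivity
    have : (p + (n + 1 : ℕ) : ℝ) = (p + n) + 1 := by push_cast; ring
    rw [this, Real.Gamma_add_one hne, ih, Finset.prod_range_succ]
    ring

private lemma gamma_ratio_tendsto (p : ℝ) (hp : 0 < p) :
    Tendsto (fun n : ℕ => Real.Gamma (n + p) / (Real.Gamma n * (n : ℝ) ^ p)) atTop (𝓝 1) := by
  have hΓp : 0 < Real.Gamma p := Real.Gamma_pos_of_pos hp
  -- the shifted sequence
  have key : Tendsto (fun n : ℕ =>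
      Real.Gamma ((n + 1 : ℕ) + p) / (Real.Gamma (n + 1 : ℕ) * ((n + 1 : ℕ) : ℝ) ^ p))
      atTop (𝓝 1) := by
    have h1 : Tendsto (fun n : ℕ => Real.Gamma p / Real.GammaSeq p n) atTop (𝓝 1) := by
      have := (tendsto_const_nhds (x := Real.Gamma p)).div
        (Real.GammaSeq_tendsto_Gamma p) hΓp.ne'
      rw [div_self hΓp.ne'] at this
      exact this
    have h2 : Tendsto (fun n : ℕ => ((n : ℝ) / (n + 1)) ^ p) atTop (𝓝 1) := by
      have hd : Tendsto (fun n : ℕ => (n : ℝ) / (n + 1)) atTop (𝓝 1) :=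
        tendsto_natCast_div_add_atTop (1 : ℝ)
      have hc : ContinuousAt (fun x : ℝ => x ^ p) 1 :=
        Real.continuousAt_rpow_const 1 p (Or.inl one_ne_zero)
      have := hc.tendsto.comp hd
      simpa [Function.comp_def] using this
    have := h1.mul h2
    rw [mul_one] at this
    refine this.congr' ?_
    filter_upwards [eventually_ge_atTop 1] with n hn
    have hnpos : (0 : ℝ) < n := by exact_mod_cast hn
    have hrp : (0 : ℝ) < (n : ℝ) ^ p := Real.rpow_pos_of_pos hnpos p
    have hfact : (0 : ℝ) < (Nat.factorial n : ℝ) := by exact_mod_cast n.factorial_pos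
    have hΓ : 0 < Real.Gamma (p + (n + 1 : ℕ)) := Real.Gamma_pos_of_pos (by positivity)
    have hGS : Real.GammaSeq p n = (n : ℝ) ^ p * (Nat.factorial n : ℝ) * Real.Gamma p /
        Real.Gamma (p + (n + 1 : ℕ)) := by
      rw [Real.GammaSeq, gamma_prod p hp (n + 1)]
      have hprodpos : (0 : ℝ) < ∏ i ∈ Finset.range (n + 1), (p + i) := by
        apply Finset.prod_pos; intro i _; positivity
      field_simp [hprodpos.ne', hΓp.ne']
    have hGam : Real.Gamma ((n + 1 : ℕ) : ℝ) = (Nat.factorial n : ℝ) := by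
      push_cast; exact Real.Gamma_nat_eq_factorial n
    have harg : ((n + 1 : ℕ) : ℝ) + p = p + (n + 1 : ℕ) := by ring
    have hn1 : (0 : ℝ) < ((n + 1 : ℕ) : ℝ) := by positivity
    have hrp1 : (0 : ℝ) < ((n + 1 : ℕ) : ℝ) ^ p := Real.rpow_pos_of_pos hn1 p
    rw [hGS, harg, hGam, Real.div_rpow hnpos.le (by positivity)]
    push_cast
    field_simp
  exact (tendsto_add_atTop_iff_nat (f := fun n : ℕ => Real.Gamma (n + p) / (Real.Gamma n * (n : ℝ) ^ p)) 1).mp key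

/-- Expected occurrence count in the positively step-reinforced random walk:
`E[N_j(n)] = (1-p)Γ(j)Γ(n+p)/(Γ(n)Γ(j+p)) ∼ (1-p)Γ(j)/Γ(j+p) · n^p`. -/
theorem expected_occurrence_count
    {Ω : Type*} {mΩ : MeasurableSpace Ω} {μ : Measure Ω} [IsProbabilityMeasure μ]
    (p : ℝ) (hp : p ∈ Set.Ioo (0 : ℝ) 1)
    (j : ℕ) (hj : 1 ≤ j)
    (ℱ : Filtration ℕ mΩ) (N : ℕ → Ω → ℝ)
    (hadapt : Adapted ℱ N) (hint : ∀ n, Integrable (N n) μ)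
    (hcond : ∀ n, j ≤ n →
      μ[N (n + 1)|ℱ n] =ᵐ[μ] fun ω => (((n : ℝ) + p) / n) * N n ω)
    (hinit : ∫ ω, N j ω ∂μ = 1 - p) :
    (∀ n, j ≤ n → ∫ ω, N n ω ∂μ =
      (1 - p) * Real.Gamma j * Real.Gamma (n + p) / (Real.Gamma n * Real.Gamma (j + p))) ∧
    Tendsto (fun n : ℕ => (∫ ω, N n ω ∂μ) / (n : ℝ) ^ p) atTop
      (𝓝 ((1 - p) * Real.Gamma j / Real.Gamma (j + p))) := by
  obtain ⟨hp0, hp1⟩ := hp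
  have hjpos : (0 : ℝ) < (j : ℝ) := by exact_mod_cast hj
  have hΓj : 0 < Real.Gamma (j : ℝ) := Real.Gamma_pos_of_pos hjpos
  have hΓjp : 0 < Real.Gamma ((j : ℝ) + p) := Real.Gamma_pos_of_pos (by positivity)
  have formula : ∀ n, j ≤ n → ∫ ω, N n ω ∂μ =
      (1 - p) * Real.Gamma j * Real.Gamma (n + p) / (Real.Gamma n * Real.Gamma (j + p)) := by
    intro n hn
    induction n, hn using Nat.le_induction with
    | base =>
      rw [hinit]
      field_simp
    | succ n hn ih =>
      have hn1 : 1 ≤ n := hj.trans hn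
      have hnpos : (0 : ℝ) < (n : ℝ) := by exact_mod_cast hn1
      have hΓn : 0 < Real.Gamma (n : ℝ) := Real.Gamma_pos_of_pos hnpos
      have hstep : ∫ ω, N (n + 1) ω ∂μ = (((n : ℝ) + p) / n) * ∫ ω, N n ω ∂μ := by
        rw [← integral_condExp (ℱ.le n) (f := N (n + 1)),
          integral_congr_ae (hcond n hn), integral_const_mul]
      have hg1 : Real.Gamma (((n + 1 : ℕ) : ℝ) + p) = ((n : ℝ) + p) * Real.Gamma (n + p) := by
        have : (((n + 1 : ℕ) : ℝ) + p) = ((n : ℝ) + p) + 1 := by push_cast; ring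
        rw [this, Real.Gamma_add_one (by positivity)]
      have hg2 : Real.Gamma ((n + 1 : ℕ) : ℝ) = (n : ℝ) * Real.Gamma n := by
        have : ((n + 1 : ℕ) : ℝ) = (n : ℝ) + 1 := by push_cast; ring
        rw [this, Real.Gamma_add_one hnpos.ne']
      rw [hstep, ih, hg1, hg2]
      field_simp
  refine ⟨formula, ?_⟩
  have hlim := (gamma_ratio_tendsto p hp0).const_mul
    ((1 - p) * Real.Gamma j / Real.Gamma ((j : ℝ) + p))
  rw [mul_one] at hlim
  refine hlim.congr' ?_
  filter_upwards [eventually_ge_atTop j] with n hn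
  rw [formula n hn]
  ring
end

section
/- For fixed j and p ∈ (0,1), N_j(n)/ω_n → 0 almost surely and in L^1, where ω_n = √n for 0 < p < 1/2, ω_n = √(n log n) for p = 1/2, and ω_n = n for 1/2 < p < 1. -/
open MeasureTheory ProbabilityTheory Filter
open scoped Topology NNReal ENNReal

private lemma harmonic_bound : ∀ n : ℕ, 1 ≤ n →
    ∑ k ∈ Finset.Ico 1 (n + 1), (1 : ℝ) / k ≤ 1 + Real.log n := by
  intro n hn
  induction n, hn using Nat.le_induction with
  | base => norm_num
  | succ n hn ih =>
    rw [Finset.sum_Ico_succ_top (by omega : 1 ≤ n + 1)]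
    have hn0 : (0 : ℝ) < n := by exact_mod_cast hn
    have key : (1 : ℝ) / (n + 1) ≤ Real.log (n + 1) - Real.log n := by
      have h := Real.log_le_sub_one_of_pos (x := (n : ℝ) / (n + 1)) (by positivity)
      rw [Real.log_div (ne_of_gt hn0) (by positivity)] at h
      have h2 : (n : ℝ) / (n + 1) - 1 = -(1 / (n + 1)) := by field_simp; ring
      linarith [h2 ▸ h]
    push_cast
    linarith

/-- For fixed `j` and `p ∈ (0,1)`, `N_j(n)/ω_n → 0` almost surely and in `L¹`, where
`ω_n = √n` for `p < 1/2`, `ω_n = √(n log n)` for `p = 1/2`, and `ω_n = n` for `p > 1/2`. -/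
theorem occurrence_count_normalized_tendsto_zero
    {Ω : Type*} {mΩ : MeasurableSpace Ω} {μ : Measure Ω} [IsProbabilityMeasure μ]
    (p : ℝ) (hp : p ∈ Set.Ioo (0 : ℝ) 1)
    (j : ℕ) (hj : 1 ≤ j)
    (ℱ : Filtration ℕ mΩ) (N : ℕ → Ω → ℝ)
    (hadapt : Adapted ℱ N) (hint : ∀ n, Integrable (N n) μ)
    (hnonneg : ∀ n, 0 ≤ᵐ[μ] N n)
    (hcond : ∀ n, j ≤ n →
      μ[N (n + 1)|ℱ n] =ᵐ[μ] fun ω => (((n : ℝ) + p) / n) * N n ω)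
    (hinit : ∫ ω, N j ω ∂μ = 1 - p)
    (w : ℕ → ℝ)
    (hw : ∀ n : ℕ, w n =
      if p < 1 / 2 then Real.sqrt n
      else if p = 1 / 2 then Real.sqrt (n * Real.log n)
      else (n : ℝ)) :
    (∀ᵐ ω ∂μ, Tendsto (fun n : ℕ => N n ω / w n) atTop (𝓝 0)) ∧
    Tendsto (fun n : ℕ => ∫ ω, |N n ω / w n| ∂μ) atTop (𝓝 0) := by
  obtain ⟨hp0, hp1⟩ := hp
  set a : ℕ → ℝ := fun n => ∏ k ∈ Finset.Ico j n, ((k : ℝ) + p) / k with ha_def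
  have ha_pos : ∀ n, 0 < a n := by
    intro n
    refine Finset.prod_pos fun k hk => ?_
    have hk1 : 1 ≤ k := le_trans hj (Finset.mem_Ico.mp hk).1
    have : (0 : ℝ) < k := by exact_mod_cast hk1
    positivity
  have ha_succ : ∀ n, j ≤ n → a (n + 1) = a n * (((n : ℝ) + p) / n) := by
    intro n hn
    exact Finset.prod_Ico_succ_top hn _
  have ha_j : a j = 1 := by simp [ha_def]
  -- upper bound a n ≤ exp p * n ^ p for n ≥ 1
  have ha_le : ∀ n : ℕ, 1 ≤ n → a n ≤ Real.exp p * (n : ℝ) ^ p := by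
    intro n hn
    have h1 : a n ≤ Real.exp (p * ∑ k ∈ Finset.Ico j n, (1 : ℝ) / k) := by
      rw [Finset.mul_sum, Real.exp_sum]
      refine Finset.prod_le_prod (fun k hk => ?_) (fun k hk => ?_)
      · have hk1 : 1 ≤ k := le_trans hj (Finset.mem_Ico.mp hk).1
        have : (0 : ℝ) < k := by exact_mod_cast hk1
        positivity
      · have hk1 : 1 ≤ k := le_trans hj (Finset.mem_Ico.mp hk).1
        have hk0 : (0 : ℝ) < k := by exact_mod_cast hk1
        have := Real.add_one_le_exp (p * (1 / k))
        have hkk : ((k : ℝ) + p) / k = p * (1 / k) + 1 := by field_simp; ring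
        linarith [hkk]
    have h2 : ∑ k ∈ Finset.Ico j n, (1 : ℝ) / k ≤ 1 + Real.log n := by
      refine le_trans (Finset.sum_le_sum_of_subset_of_nonneg ?_ ?_) (harmonic_bound n hn)
      · exact Finset.Ico_subset_Ico hj (by omega)
      · intro k _ _; positivity
    calc a n ≤ Real.exp (p * ∑ k ∈ Finset.Ico j n, (1 : ℝ) / k) := h1
      _ ≤ Real.exp (p * (1 + Real.log n)) := by
          exact Real.exp_le_exp.mpr (by nlinarith)
      _ = Real.exp p * (n : ℝ) ^ p := by
          rw [mul_add, Real.exp_add, mul_one, Real.rpow_def_of_pos (by exact_mod_cast hn)]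
          ring_nf
  have hw_nonneg : ∀ n, 0 ≤ w n := by
    intro n
    rw [hw n]
    split_ifs with h1 h2
    · exact Real.sqrt_nonneg _
    · exact Real.sqrt_nonneg _
    · positivity
  -- key asymptotic: n^p / w n → 0
  have hpow : Tendsto (fun n : ℕ => (n : ℝ) ^ p / w n) atTop (𝓝 0) := by
    rcases lt_trichotomy p (1 / 2) with hlt | heq | hgt
    · have h0 : Tendsto (fun x : ℝ => x ^ (p - 1 / 2)) atTop (𝓝 0) := by
        have := tendsto_rpow_neg_atTop (y := 1 / 2 - p) (by linarith)
        simpa [neg_sub] using this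
      have h1 := h0.comp tendsto_natCast_atTop_atTop (α := ℕ)
      refine h1.congr' ?_
      filter_upwards [eventually_ge_atTop 1] with n hn
      have hn0 : (0 : ℝ) < n := by exact_mod_cast hn
      rw [hw n, if_pos hlt, Real.sqrt_eq_rpow, Function.comp_apply,
        Real.rpow_sub hn0]
    · have hlog : Tendsto (fun n : ℕ => (Real.log n)⁻¹) atTop (𝓝 0) :=
        (Real.tendsto_log_atTop.comp tendsto_natCast_atTop_atTop).inv_tendsto_atTop
      have h0 : Tendsto (fun n : ℕ => Real.sqrt ((Real.log n)⁻¹)) atTop (𝓝 0) := by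
        have := (Real.continuous_sqrt.tendsto 0).comp hlog
        simpa [Function.comp_def] using this
      refine h0.congr' ?_
      filter_upwards [eventually_ge_atTop 3] with n hn
      have hn0 : (0 : ℝ) < n := by exact_mod_cast (by omega : 0 < n)
      have hlogpos : 0 < Real.log n := by
        refine Real.log_pos ?_
        exact_mod_cast (by omega : 1 < n)
      rw [hw n, if_neg (by linarith), if_pos heq, heq]
      rw [← Real.sqrt_eq_rpow]
      rw [← Real.sqrt_div hn0.le]
      congr 1
      field_simp
    · have h0 : Tendsto (fun x : ℝ => x ^ (p - 1)) atTop (𝓝 0) := by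
        have := tendsto_rpow_neg_atTop (y := 1 - p) (by linarith)
        simpa [neg_sub] using this
      have h1 := h0.comp tendsto_natCast_atTop_atTop (α := ℕ)
      refine h1.congr' ?_
      filter_upwards [eventually_ge_atTop 1] with n hn
      have hn0 : (0 : ℝ) < n := by exact_mod_cast hn
      rw [hw n, if_neg (by linarith), if_neg (by linarith), Function.comp_apply,
        Real.rpow_sub hn0, Real.rpow_one]
  -- ratio a n / w n → 0
  have hratio : Tendsto (fun n : ℕ => a n / w n) atTop (𝓝 0) := by
    have hup : Tendsto (fun n : ℕ => Real.exp p * ((n : ℝ) ^ p / w n)) atTop (𝓝 0) := by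
      simpa using hpow.const_mul (Real.exp p)
    refine tendsto_of_tendsto_of_tendsto_of_le_of_le' tendsto_const_nhds hup ?_ ?_
    · filter_upwards with n
      exact div_nonneg (ha_pos n).le (hw_nonneg n)
    · filter_upwards [eventually_ge_atTop 1] with n hn
      rw [mul_div_assoc'] -- exp p * n^p / w n
      rcases eq_or_lt_of_le (hw_nonneg n) with h0 | h0
      · rw [← h0, div_zero, div_zero]
      · exact div_le_div₀ (by positivity) (ha_le n hn) h0 le_rfl
  -- expectations
  have hEN : ∀ n, j ≤ n → ∫ ω, N n ω ∂μ = (1 - p) * a n := by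
    intro n hn
    induction n, hn using Nat.le_induction with
    | base => rw [hinit, ha_j, mul_one]
    | succ n hn ih =>
      have h1 : ∫ ω, N (n + 1) ω ∂μ = ∫ ω, (μ[N (n + 1)|ℱ n]) ω ∂μ :=
        (integral_condExp (ℱ.le n)).symm
      rw [h1, integral_congr_ae (hcond n hn), integral_const_mul, ih, ha_succ n hn]
      ring
  -- L¹ convergence
  have hL1 : Tendsto (fun n : ℕ => ∫ ω, |N n ω / w n| ∂μ) atTop (𝓝 0) := by
    have h0 : Tendsto (fun n : ℕ => (1 - p) * (a n / w n)) atTop (𝓝 0) := by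
      simpa using hratio.const_mul (1 - p)
    refine h0.congr' ?_
    filter_upwards [eventually_ge_atTop j] with n hn
    have h1 : ∫ ω, |N n ω / w n| ∂μ = ∫ ω, N n ω / w n ∂μ := by
      refine integral_congr_ae ?_
      filter_upwards [hnonneg n] with ω hω
      exact abs_of_nonneg (div_nonneg hω (hw_nonneg n))
    rw [h1, integral_div, hEN n hn, mul_div_assoc]
  -- shifted filtration and martingale
  set ℱ' : Filtration ℕ mΩ :=
    ⟨fun n => ℱ (n + j), fun m n h => ℱ.mono (by omega), fun n => ℱ.le _⟩ with hF'_def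
  set M : ℕ → Ω → ℝ := fun n => (a (n + j))⁻¹ • N (n + j) with hM_def
  have hMapp : ∀ n ω, M n ω = (a (n + j))⁻¹ * N (n + j) ω := fun n ω => rfl
  have hM : Martingale M ℱ' μ := by
    refine martingale_nat (fun n => ((hadapt (n + j)).const_smul _).stronglyMeasurable)
      (fun n => (hint (n + j)).smul _) (fun n => ?_)
    have h1 : μ[M (n + 1)|ℱ' n] =ᵐ[μ] (a (n + 1 + j))⁻¹ • μ[N (n + 1 + j)|ℱ (n + j)] :=
      condExp_smul _ _ _
    have hidx : n + 1 + j = n + j + 1 := by omega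
    rw [hidx] at h1
    have h2 := hcond (n + j) (Nat.le_add_left _ _)
    have hnum : (0 : ℝ) < ((n + j : ℕ) : ℝ) := by
      have h1j : 1 ≤ n + j := by omega
      exact_mod_cast Nat.lt_of_lt_of_le Nat.zero_lt_one h1j
    have hc_ne : (((n + j : ℕ) : ℝ) + p) / ((n + j : ℕ) : ℝ) ≠ 0 := by positivity
    have hsucc := ha_succ (n + j) (Nat.le_add_left _ _)
    filter_upwards [h1, h2] with ω hω1 hω2
    rw [hMapp n ω, hω1]
    simp only [Pi.smul_apply, smul_eq_mul]
    rw [hω2, hsucc, mul_inv]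
    have hane : a (n + j) ≠ 0 := (ha_pos _).ne'
    have hjr : (1 : ℝ) ≤ (j : ℝ) := by exact_mod_cast hj
    have hnr : (0 : ℝ) ≤ (n : ℝ) := Nat.cast_nonneg n
    have h3 : ((n : ℝ) + (j : ℝ)) ≠ 0 := by linarith
    have h4 : ((n : ℝ) + (j : ℝ) + p) ≠ 0 := by linarith
    push_cast
    field_simp
  have hbdd : ∀ n, eLpNorm (M n) 1 μ ≤ ((1 : ℝ≥0) : ℝ≥0∞) := by
    intro n
    have hMint : Integrable (M n) μ := (hint (n + j)).smul _
    have hMnn : 0 ≤ᵐ[μ] M n := by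
      filter_upwards [hnonneg (n + j)] with ω hω
      rw [hMapp]
      exact mul_nonneg (inv_nonneg.mpr (ha_pos _).le) hω
    have hInt : ∫ ω, M n ω ∂μ = 1 - p := by
      simp only [hM_def, Pi.smul_apply, smul_eq_mul]
      rw [integral_const_mul, hEN (n + j) (Nat.le_add_left _ _)]
      field_simp [(ha_pos (n + j)).ne']
    rw [eLpNorm_one_eq_lintegral_enorm]
    have hlin : ∫⁻ ω, ‖M n ω‖ₑ ∂μ = ENNReal.ofReal (∫ ω, M n ω ∂μ) := by
      rw [ofReal_integral_eq_lintegral_ofReal hMint hMnn]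
      refine lintegral_congr_ae ?_
      filter_upwards [hMnn] with ω hω
      rw [← Real.enorm_eq_ofReal hω]
    rw [hlin, hInt, ENNReal.coe_one]
    exact ENNReal.ofReal_le_one.mpr (by linarith)
  have hconv := hM.submartingale.ae_tendsto_limitProcess hbdd
  refine ⟨?_, hL1⟩
  filter_upwards [hconv] with ω hω
  have h1 : Tendsto (fun n : ℕ => M (n - j) ω) atTop
      (𝓝 (Filtration.limitProcess M ℱ' μ ω)) := hω.comp (tendsto_sub_atTop_nat j)
  have h2 := h1.mul hratio
  rw [mul_zero] at h2
  refine h2.congr' ?_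
  filter_upwards [eventually_ge_atTop j] with n hn
  have hnj : n - j + j = n := Nat.sub_add_cancel hn
  show M (n - j) ω * (a n / w n) = N n ω / w n
  rw [hMapp, hnj]
  calc (a n)⁻¹ * N n ω * (a n / w n) = ((a n)⁻¹ * a n) * (N n ω / w n) := by ring
    _ = N n ω / w n := by rw [inv_mul_cancel₀ (ha_pos n).ne', one_mul]
end

section
/- For fixed j and p ∈ (0,1), E[Δ_j(n)] = (1−p)Γ(j)Γ(n−p)/(Γ(n)Γ(j−p)) ∼ (1−p)Γ(j)/Γ(j−p) · n^{−p}, and E[Δ_j(n)^2] = E[N_j(n)]/3 + O(n^{−2p}) ∼ (1−p)Γ(j)/(3Γ(j+p)) · n^p as n → ∞. -/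
open MeasureTheory ProbabilityTheory Filter
open scoped Topology ENNReal

private lemma aux_ineq (q x : ℝ) (hq : 0 ≤ q) (hx : 0 < x) : 1 - q / x ≤ (x / (x + 1)) ^ q := by
  have hx1 : 0 < x + 1 := by linarith
  have hb : 0 < x / (x + 1) := by positivity
  have h1 : (x / (x + 1)) ^ q = Real.exp (Real.log (x / (x + 1)) * q) :=
    Real.rpow_def_of_pos hb q
  have h2 : Real.log (x / (x + 1)) * q + 1 ≤ Real.exp (Real.log (x / (x + 1)) * q) :=
    Real.add_one_le_exp _
  have h3 : Real.log ((x + 1) / x) ≤ 1 / x := by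
    have h := Real.log_le_sub_one_of_pos (show 0 < (x + 1) / x by positivity)
    have h' : (x + 1) / x - 1 = 1 / x := by field_simp; ring
    linarith
  have h4 : Real.log (x / (x + 1)) = -Real.log ((x + 1) / x) := by
    rw [Real.log_div hx.ne' hx1.ne', Real.log_div hx1.ne' hx.ne']; ring
  have h5 : q * Real.log ((x + 1) / x) ≤ q * (1 / x) :=
    mul_le_mul_of_nonneg_left h3 hq
  rw [h1]
  have h6 : 1 - q / x ≤ Real.log (x / (x + 1)) * q + 1 := by
    rw [h4]
    have : q * (1 / x) = q / x := by ring
    nlinarith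
  linarith

private lemma aux_gamma_prod (s : ℝ) (hs : 0 < s) (m : ℕ) :
    Real.Gamma (s + m) = Real.Gamma s * ∏ k ∈ Finset.range m, (s + k) := by
  induction m with
  | zero => simp
  | succ m ih =>
    have h1 : s + (m : ℝ) ≠ 0 := by positivity
    have h2 : s + ((m + 1 : ℕ) : ℝ) = (s + m) + 1 := by push_cast; ring
    rw [h2, Real.Gamma_add_one h1, ih, Finset.prod_range_succ]; ring

private lemma aux_gamma_ratio (a : ℝ) (ha : 0 < 1 + a) :
    Tendsto (fun n : ℕ => Real.Gamma ((n : ℝ) + a) * (n : ℝ) ^ (-a) / Real.Gamma (n : ℝ))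
      atTop (𝓝 1) := by
  set s := 1 + a with hs_def
  have hΓs : 0 < Real.Gamma s := Real.Gamma_pos_of_pos ha
  have hu : Tendsto (fun n => Real.GammaSeq s n / Real.Gamma s) atTop (𝓝 1) := by
    simpa [div_self hΓs.ne'] using (Real.GammaSeq_tendsto_Gamma s).div_const (Real.Gamma s)
  have huval : ∀ n : ℕ, Real.GammaSeq s n / Real.Gamma s
      = (n : ℝ) ^ s * (n.factorial : ℝ) / Real.Gamma ((n : ℝ) + 2 + a) := by
    intro n
    have h1 : ((n : ℝ) + 2 + a) = s + ((n + 1 : ℕ) : ℝ) := by push_cast; rw [hs_def]; ring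
    rw [h1, aux_gamma_prod s ha (n + 1), Real.GammaSeq, div_div, mul_comm (Real.Gamma s)]
  have hv : Tendsto (fun n : ℕ => ((n : ℝ) / ((n : ℝ) + 1)) * ((n : ℝ) / ((n : ℝ) + 2)) ^ a)
      atTop (𝓝 1) := by
    have h1 : Tendsto (fun n : ℕ => (n : ℝ) / ((n : ℝ) + 1)) atTop (𝓝 1) :=
      tendsto_natCast_div_add_atTop (1 : ℝ)
    have h2 : Tendsto (fun n : ℕ => ((n : ℝ) / ((n : ℝ) + 2)) ^ a) atTop (𝓝 1) := by
      have h3 : Tendsto (fun n : ℕ => (n : ℝ) / ((n : ℝ) + 2)) atTop (𝓝 1) :=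
        tendsto_natCast_div_add_atTop (2 : ℝ)
      have := h3.rpow (tendsto_const_nhds (x := a)) (Or.inl one_ne_zero)
      simpa using this
    simpa using h1.mul h2
  have key : Tendsto (fun n : ℕ =>
      Real.Gamma ((↑(n + 2) : ℝ) + a) * (↑(n + 2) : ℝ) ^ (-a) / Real.Gamma (↑(n + 2) : ℝ))
      atTop (𝓝 1) := by
    have heq : ∀ᶠ n : ℕ in atTop,
        (((n : ℝ) / ((n : ℝ) + 1)) * ((n : ℝ) / ((n : ℝ) + 2)) ^ a)
          / (Real.GammaSeq s n / Real.Gamma s)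
        = Real.Gamma ((↑(n + 2) : ℝ) + a) * (↑(n + 2) : ℝ) ^ (-a)
          / Real.Gamma (↑(n + 2) : ℝ) := by
      filter_upwards [eventually_ge_atTop 1] with n hn
      have hn0 : (0 : ℝ) < n := by exact_mod_cast hn
      have hΓfac : Real.Gamma (↑(n + 2) : ℝ) = ((n + 1) : ℕ) * (n.factorial : ℝ) := by
        have : (↑(n + 2) : ℝ) = ((n + 1 : ℕ) : ℝ) + 1 := by push_cast; ring
        rw [this, Real.Gamma_nat_eq_factorial, Nat.factorial_succ]; push_cast; ring
      have harg : (↑(n + 2) : ℝ) + a = (n : ℝ) + 2 + a := by push_cast; ring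
      have hΓpos : 0 < Real.Gamma ((n : ℝ) + 2 + a) := Real.Gamma_pos_of_pos (by linarith)
      rw [huval n, harg, hΓfac]
      have hns : (n : ℝ) ^ s = (n : ℝ) * (n : ℝ) ^ a := by
        rw [hs_def, Real.rpow_add hn0, Real.rpow_one]
      have hdiv : ((n : ℝ) / ((n : ℝ) + 2)) ^ a = (n : ℝ) ^ a / ((n : ℝ) + 2) ^ a :=
        Real.div_rpow hn0.le (by positivity) a
      have hneg : (↑(n + 2) : ℝ) ^ (-a) = (((n : ℝ) + 2) ^ a)⁻¹ := by
        rw [Real.rpow_neg (by positivity)]; congr 2; push_cast; ring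
      have hfac : (0 : ℝ) < (n.factorial : ℝ) := by exact_mod_cast n.factorial_pos
      have hna : (0 : ℝ) < (n : ℝ) ^ a := Real.rpow_pos_of_pos hn0 a
      have hn2a : (0 : ℝ) < ((n : ℝ) + 2) ^ a := Real.rpow_pos_of_pos (by linarith) a
      rw [hns, hdiv, hneg]
      push_cast
      field_simp
    exact Tendsto.congr' heq (by have h := hv.div hu one_ne_zero; rw [div_one] at h; exact h)
  exact (tendsto_add_atTop_iff_nat 2).mp key

private lemma seq_gamma (a c : ℝ) (ha : 0 < 1 + a) (j : ℕ) (hj : 1 ≤ j) (I : ℕ → ℝ)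
    (hrec : ∀ n, j ≤ n → I (n + 1) = (((n : ℝ) + a) / n) * I n) (hinit : I j = c) :
    ∀ n, j ≤ n → I n = c * Real.Gamma ((n : ℝ) + a) * Real.Gamma (j : ℝ)
      / (Real.Gamma ((j : ℝ) + a) * Real.Gamma (n : ℝ)) := by
  have hj0 : (0 : ℝ) < j := by exact_mod_cast hj
  have hΓj : 0 < Real.Gamma (j : ℝ) := Real.Gamma_pos_of_pos hj0
  have hΓja : 0 < Real.Gamma ((j : ℝ) + a) := Real.Gamma_pos_of_pos (by
    have : (1 : ℝ) ≤ j := by exact_mod_cast hj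
    linarith)
  refine Nat.le_induction ?_ ?_
  · rw [hinit]; field_simp
  · intro n hn ih
    have hn1 : (1 : ℝ) ≤ (n : ℝ) := by
      have h1 : (1 : ℝ) ≤ (j : ℝ) := by exact_mod_cast hj
      have h2 : (j : ℝ) ≤ (n : ℝ) := by exact_mod_cast hn
      linarith
    have hn0 : (n : ℝ) ≠ 0 := by linarith
    have hna : (n : ℝ) + a ≠ 0 := by linarith
    have hΓn : 0 < Real.Gamma (n : ℝ) := Real.Gamma_pos_of_pos (by linarith)
    have h1 : Real.Gamma ((↑(n + 1) : ℝ) + a) = ((n : ℝ) + a) * Real.Gamma ((n : ℝ) + a) := by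
      have : (↑(n + 1) : ℝ) + a = ((n : ℝ) + a) + 1 := by push_cast; ring
      rw [this, Real.Gamma_add_one hna]
    have h2 : Real.Gamma (↑(n + 1) : ℝ) = (n : ℝ) * Real.Gamma (n : ℝ) := by
      have : (↑(n + 1) : ℝ) = (n : ℝ) + 1 := by push_cast; ring
      rw [this, Real.Gamma_add_one hn0]
    rw [hrec n hn, ih, h1, h2]
    field_simp

private lemma seq_bound (p : ℝ) (hp0 : 0 < p) (hp1 : p < 1) (j : ℕ) (hj : 1 ≤ j) (e : ℕ → ℝ)
    (hrec : ∀ n, j ≤ n → e (n + 1) = (((n : ℝ) - 2 * p) / n) * e n) :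
    ∃ C : ℝ, ∀ n, j ≤ n → |e n| ≤ C * (n : ℝ) ^ (-(2 * p)) := by
  set q := 2 * p with hq_def
  have hq0 : 0 ≤ q := by positivity
  have hq2 : q < 2 := by simp [hq_def]; linarith
  set C := (|e j| + |e (j + 1)|) * ((j : ℝ) + 1) ^ q with hC_def
  have hC0 : 0 ≤ C := by positivity
  have hj1 : (1 : ℝ) ≤ (j : ℝ) := by exact_mod_cast hj
  have hbase : ∀ m : ℕ, 1 ≤ m → |e m| * (m : ℝ) ^ q ≤ C → |e m| ≤ C * (m : ℝ) ^ (-q) := by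
    intro m hm h
    have hm0 : (0 : ℝ) < m := by exact_mod_cast hm
    have hmq : (0 : ℝ) < (m : ℝ) ^ q := Real.rpow_pos_of_pos hm0 q
    rw [Real.rpow_neg hm0.le, ← div_eq_mul_inv, le_div_iff₀ hmq]
    exact h
  have hQ : ∀ n, j + 1 ≤ n → |e n| ≤ C * (n : ℝ) ^ (-q) := by
    refine Nat.le_induction ?_ ?_
    · refine hbase (j + 1) (by omega) ?_
      rw [hC_def]
      have h1 : (↑(j + 1) : ℝ) ^ q = ((j : ℝ) + 1) ^ q := by push_cast; ring_nf
      rw [h1]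
      have := abs_nonneg (e j)
      have h2 : (0 : ℝ) ≤ ((j : ℝ) + 1) ^ q := (Real.rpow_pos_of_pos (by linarith) q).le
      nlinarith
    · intro n hn ih
      have hn2 : (2 : ℝ) ≤ (n : ℝ) := by
        have : 2 ≤ n := by omega
        exact_mod_cast this
      have hn0 : (0 : ℝ) < (n : ℝ) := by linarith
      have hfac0 : 0 ≤ ((n : ℝ) - q) / n := div_nonneg (by linarith) hn0.le
      have h1 : |e (n + 1)| = (((n : ℝ) - q) / n) * |e n| := by
        rw [hrec n (by omega), abs_mul, abs_of_nonneg hfac0]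
      have h2 : (((n : ℝ) - q) / n) * |e n| ≤ (((n : ℝ) - q) / n) * (C * (n : ℝ) ^ (-q)) :=
        mul_le_mul_of_nonneg_left ih hfac0
      have h3 : ((n : ℝ) - q) / n ≤ ((n : ℝ) / ((n : ℝ) + 1)) ^ q := by
        have := aux_ineq q (n : ℝ) hq0 hn0
        have heq : ((n : ℝ) - q) / n = 1 - q / n := by field_simp
        linarith
      have h4 : 0 ≤ C * (n : ℝ) ^ (-q) := mul_nonneg hC0 (Real.rpow_nonneg hn0.le _)
      have h5 : (((n : ℝ) - q) / n) * (C * (n : ℝ) ^ (-q))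
          ≤ (((n : ℝ) / ((n : ℝ) + 1)) ^ q) * (C * (n : ℝ) ^ (-q)) :=
        mul_le_mul_of_nonneg_right h3 h4
      have h6 : (((n : ℝ) / ((n : ℝ) + 1)) ^ q) * (C * (n : ℝ) ^ (-q))
          = C * (↑(n + 1) : ℝ) ^ (-q) := by
        have hnq : (0 : ℝ) < (n : ℝ) ^ q := Real.rpow_pos_of_pos hn0 q
        have hn1q : (0 : ℝ) < ((n : ℝ) + 1) ^ q := Real.rpow_pos_of_pos (by linarith) q
        rw [Real.div_rpow hn0.le (by linarith), Real.rpow_neg hn0.le,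
          Real.rpow_neg (by positivity)]
        push_cast
        field_simp
      rw [h1]
      calc (((n : ℝ) - q) / n) * |e n| ≤ (((n : ℝ) - q) / n) * (C * (n : ℝ) ^ (-q)) := h2
        _ ≤ (((n : ℝ) / ((n : ℝ) + 1)) ^ q) * (C * (n : ℝ) ^ (-q)) := h5
        _ = C * (↑(n + 1) : ℝ) ^ (-q) := h6
  refine ⟨C, fun n hn => ?_⟩
  rcases eq_or_lt_of_le hn with h | h
  · subst h
    refine hbase j hj ?_
    rw [hC_def]
    have h2 : (0 : ℝ) ≤ ((j : ℝ) + 1) ^ q := (Real.rpow_pos_of_pos (by linarith) q).le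
    have h3 : (j : ℝ) ^ q ≤ ((j : ℝ) + 1) ^ q :=
      Real.rpow_le_rpow (Nat.cast_nonneg j) (by linarith) hq0
    have := abs_nonneg (e j)
    have := abs_nonneg (e (j + 1))
    nlinarith
  · exact hQ n h

/-- First and second moments of the signed occurrence count `Δ_j(n)` in the negatively
step-reinforced random walk: `E[Δ_j(n)] = (1-p)Γ(j)Γ(n-p)/(Γ(n)Γ(j-p)) ∼ (1-p)Γ(j)/Γ(j-p)·n^{-p}`
and `E[Δ_j(n)²] = E[N_j(n)]/3 + O(n^{-2p}) ∼ (1-p)Γ(j)/(3Γ(j+p))·n^p`. -/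
theorem signed_occurrence_count_moments
    {Ω : Type*} {mΩ : MeasurableSpace Ω} {μ : Measure Ω} [IsProbabilityMeasure μ]
    (p : ℝ) (hp : p ∈ Set.Ioo (0 : ℝ) 1)
    (j : ℕ) (hj : 1 ≤ j)
    (ℱ : Filtration ℕ mΩ) (Δ N : ℕ → Ω → ℝ)
    (hadaptΔ : Adapted ℱ Δ) (hadaptN : Adapted ℱ N)
    (hintΔ : ∀ n, Integrable (Δ n) μ)
    (hintΔ2 : ∀ n, Integrable (fun ω => (Δ n ω) ^ 2) μ)
    (hintN : ∀ n, Integrable (N n) μ)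
    (hcond1 : ∀ n, j ≤ n →
      μ[fun ω => Δ (n + 1) ω - Δ n ω|ℱ n] =ᵐ[μ] fun ω => -p * Δ n ω / n)
    (hcond2 : ∀ n, j ≤ n →
      μ[fun ω => (Δ (n + 1) ω - Δ n ω) ^ 2|ℱ n] =ᵐ[μ] fun ω => p * N n ω / n)
    (hcondN : ∀ n, j ≤ n →
      μ[N (n + 1)|ℱ n] =ᵐ[μ] fun ω => (((n : ℝ) + p) / n) * N n ω)
    (hinitΔ : ∫ ω, Δ j ω ∂μ = 1 - p)
    (hinitΔ2 : ∫ ω, (Δ j ω) ^ 2 ∂μ = 1 - p)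
    (hinitN : ∫ ω, N j ω ∂μ = 1 - p) :
    (∀ n, j ≤ n → ∫ ω, Δ n ω ∂μ =
      (1 - p) * Real.Gamma j * Real.Gamma (n - p) / (Real.Gamma n * Real.Gamma (j - p))) ∧
    Tendsto (fun n : ℕ => (∫ ω, Δ n ω ∂μ) * (n : ℝ) ^ p) atTop
      (𝓝 ((1 - p) * Real.Gamma j / Real.Gamma (j - p))) ∧
    (∃ C : ℝ, ∀ n, j ≤ n →
      |(∫ ω, (Δ n ω) ^ 2 ∂μ) - (∫ ω, N n ω ∂μ) / 3| ≤ C * (n : ℝ) ^ (-(2 * p))) ∧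
    Tendsto (fun n : ℕ => (∫ ω, (Δ n ω) ^ 2 ∂μ) / (n : ℝ) ^ p) atTop
      (𝓝 ((1 - p) * Real.Gamma j / (3 * Real.Gamma (j + p)))) := by
  obtain ⟨hp0, hp1⟩ := hp
  have hL2 : ∀ m, MemLp (Δ m) 2 μ := fun m =>
    (memLp_two_iff_integrable_sq ((hadaptΔ m).stronglyMeasurable.mono (ℱ.le m)).aestronglyMeasurable).mpr
      (hintΔ2 m)
  -- recurrence for the first moment
  have recI : ∀ n, j ≤ n → (∫ ω, Δ (n + 1) ω ∂μ) = (((n : ℝ) + -p) / n) * ∫ ω, Δ n ω ∂μ := by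
    intro n hn
    have hn0 : ((n : ℝ)) ≠ 0 := Nat.cast_ne_zero.mpr (by omega)
    have h1 : ∫ ω, (Δ (n + 1) ω - Δ n ω) ∂μ = ∫ ω, -p * Δ n ω / n ∂μ := by
      calc ∫ ω, (Δ (n + 1) ω - Δ n ω) ∂μ
          = ∫ ω, (μ[fun ω => Δ (n + 1) ω - Δ n ω|ℱ n]) ω ∂μ :=
            (integral_condExp (ℱ.le n)).symm
        _ = ∫ ω, -p * Δ n ω / n ∂μ := integral_congr_ae (hcond1 n hn)
    rw [integral_sub (hintΔ (n + 1)) (hintΔ n)] at h1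
    have h2 : ∫ ω, -p * Δ n ω / (n : ℝ) ∂μ = (-p / (n : ℝ)) * ∫ ω, Δ n ω ∂μ := by
      rw [← integral_const_mul]
      exact integral_congr_ae (ae_of_all _ fun ω => by ring)
    rw [h2] at h1
    have h3 : (∫ ω, Δ (n + 1) ω ∂μ)
        = (∫ ω, Δ n ω ∂μ) + (-p / (n : ℝ)) * ∫ ω, Δ n ω ∂μ := by linarith
    rw [h3]; field_simp
  -- recurrence for E[N]
  have recM : ∀ n, j ≤ n → (∫ ω, N (n + 1) ω ∂μ) = (((n : ℝ) + p) / n) * ∫ ω, N n ω ∂μ := by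
    intro n hn
    calc ∫ ω, N (n + 1) ω ∂μ
        = ∫ ω, (μ[N (n + 1)|ℱ n]) ω ∂μ := (integral_condExp (ℱ.le n)).symm
      _ = ∫ ω, (((n : ℝ) + p) / n) * N n ω ∂μ := integral_congr_ae (hcondN n hn)
      _ = (((n : ℝ) + p) / n) * ∫ ω, N n ω ∂μ := integral_const_mul _ _
  -- recurrence for the second moment
  have recB : ∀ n, j ≤ n → (∫ ω, (Δ (n + 1) ω) ^ 2 ∂μ)
      = (((n : ℝ) - 2 * p) / n) * (∫ ω, (Δ n ω) ^ 2 ∂μ) + (p / (n : ℝ)) * ∫ ω, N n ω ∂μ := by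
    intro n hn
    have hn0 : ((n : ℝ)) ≠ 0 := Nat.cast_ne_zero.mpr (by omega)
    have hgint : Integrable (fun ω => Δ (n + 1) ω - Δ n ω) μ := (hintΔ (n + 1)).sub (hintΔ n)
    have hgL2 : MemLp (fun ω => Δ (n + 1) ω - Δ n ω) 2 μ := (hL2 (n + 1)).sub (hL2 n)
    have hg2 : Integrable (fun ω => (Δ (n + 1) ω - Δ n ω) ^ 2) μ := hgL2.integrable_sq
    have hcross : Integrable (fun ω => Δ n ω * (Δ (n + 1) ω - Δ n ω)) μ := by
      have hpq : (1 : ℝ≥0∞) / 1 = 1 / 2 + 1 / 2 := by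
        rw [ENNReal.add_halves]; norm_num
      haveI : ENNReal.HolderTriple 2 2 1 := ⟨by simp only [← one_div]; exact hpq.symm⟩
      have h : MemLp (Δ n • fun ω => Δ (n + 1) ω - Δ n ω) 1 μ := hgL2.smul (hL2 n)
      exact memLp_one_iff_integrable.mp h
    have hcross2 : Integrable (fun ω => 2 * (Δ n ω * (Δ (n + 1) ω - Δ n ω))) μ :=
      hcross.const_mul 2
    have hA : ∫ ω, (Δ (n + 1) ω - Δ n ω) ^ 2 ∂μ = (p / (n : ℝ)) * ∫ ω, N n ω ∂μ := by
      calc ∫ ω, (Δ (n + 1) ω - Δ n ω) ^ 2 ∂μ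
          = ∫ ω, (μ[fun ω => (Δ (n + 1) ω - Δ n ω) ^ 2|ℱ n]) ω ∂μ :=
            (integral_condExp (ℱ.le n)).symm
        _ = ∫ ω, p * N n ω / n ∂μ := integral_congr_ae (hcond2 n hn)
        _ = ∫ ω, (p / (n : ℝ)) * N n ω ∂μ := integral_congr_ae (ae_of_all _ fun ω => by ring)
        _ = (p / (n : ℝ)) * ∫ ω, N n ω ∂μ := integral_const_mul _ _
    have hpull := condExp_mul_of_stronglyMeasurable_left (m := ℱ n) (hadaptΔ n).stronglyMeasurable
      (hcross : Integrable (Δ n * fun ω => Δ (n + 1) ω - Δ n ω) μ) hgint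
    have hB1 : ∫ ω, Δ n ω * (Δ (n + 1) ω - Δ n ω) ∂μ
        = (-(p / (n : ℝ))) * ∫ ω, (Δ n ω) ^ 2 ∂μ := by
      calc ∫ ω, Δ n ω * (Δ (n + 1) ω - Δ n ω) ∂μ
          = ∫ ω, (μ[Δ n * fun ω => Δ (n + 1) ω - Δ n ω|ℱ n]) ω ∂μ :=
            (integral_condExp (ℱ.le n)).symm
        _ = ∫ ω, Δ n ω * ((μ[fun ω => Δ (n + 1) ω - Δ n ω|ℱ n]) ω) ∂μ :=
            integral_congr_ae (by filter_upwards [hpull] with ω h; exact h)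
        _ = ∫ ω, Δ n ω * (-p * Δ n ω / n) ∂μ :=
            integral_congr_ae (by filter_upwards [hcond1 n hn] with ω h; rw [h])
        _ = ∫ ω, (-(p / (n : ℝ))) * (Δ n ω) ^ 2 ∂μ :=
            integral_congr_ae (ae_of_all _ fun ω => by ring)
        _ = (-(p / (n : ℝ))) * ∫ ω, (Δ n ω) ^ 2 ∂μ := integral_const_mul _ _
    have hsplit : ∫ ω, (Δ (n + 1) ω) ^ 2 ∂μ
        = ∫ ω, ((Δ (n + 1) ω - Δ n ω) ^ 2 + 2 * (Δ n ω * (Δ (n + 1) ω - Δ n ω))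
            + (Δ n ω) ^ 2) ∂μ :=
      integral_congr_ae (ae_of_all _ fun ω => by ring)
    have hi1 : Integrable (fun ω => (Δ (n + 1) ω - Δ n ω) ^ 2
        + 2 * (Δ n ω * (Δ (n + 1) ω - Δ n ω))) μ := hg2.add hcross2
    rw [hsplit, integral_add hi1 (hintΔ2 n), integral_add hg2 hcross2, hA,
      integral_const_mul, hB1]
    field_simp
    ring
  -- closed forms
  have hIcf := seq_gamma (-p) (1 - p) (by linarith) j hj (fun n => ∫ ω, Δ n ω ∂μ) recI hinitΔ
  have hMcf := seq_gamma p (1 - p) (by linarith) j hj (fun n => ∫ ω, N n ω ∂μ) recM hinitN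
  have part1 : ∀ n, j ≤ n → ∫ ω, Δ n ω ∂μ =
      (1 - p) * Real.Gamma j * Real.Gamma (n - p) / (Real.Gamma n * Real.Gamma (j - p)) := by
    intro n hn
    calc ∫ ω, Δ n ω ∂μ
        = (1 - p) * Real.Gamma ((n : ℝ) + -p) * Real.Gamma (j : ℝ)
          / (Real.Gamma ((j : ℝ) + -p) * Real.Gamma (n : ℝ)) := hIcf n hn
      _ = (1 - p) * Real.Gamma j * Real.Gamma (n - p) / (Real.Gamma n * Real.Gamma (j - p)) := by
          rw [sub_eq_add_neg ((n : ℝ)) p, sub_eq_add_neg ((j : ℝ)) p]; ring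
  have hrecE : ∀ n, j ≤ n →
      ((∫ ω, (Δ (n + 1) ω) ^ 2 ∂μ) - (∫ ω, N (n + 1) ω ∂μ) / 3)
        = (((n : ℝ) - 2 * p) / n)
          * ((∫ ω, (Δ n ω) ^ 2 ∂μ) - (∫ ω, N n ω ∂μ) / 3) := by
    intro n hn
    have hn0 : ((n : ℝ)) ≠ 0 := Nat.cast_ne_zero.mpr (by omega)
    rw [recB n hn, recM n hn]
    field_simp
    ring
  refine ⟨part1, ?_, ?_, ?_⟩
  · -- first limit
    have hgr := aux_gamma_ratio (-p) (by linarith)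
    have hlim := hgr.const_mul ((1 - p) * Real.Gamma (j : ℝ) / Real.Gamma ((j : ℝ) - p))
    refine Tendsto.congr' ?_ (by simpa using hlim)
    filter_upwards [eventually_ge_atTop j] with n hn
    rw [part1 n hn, sub_eq_add_neg ((n : ℝ)) p, sub_eq_add_neg ((j : ℝ)) p]
    ring
  · -- O(n^{-2p}) bound
    exact seq_bound p hp0 hp1 j hj
      (fun n => (∫ ω, (Δ n ω) ^ 2 ∂μ) - (∫ ω, N n ω ∂μ) / 3) hrecE
  · -- second limit
    obtain ⟨C, hC⟩ := seq_bound p hp0 hp1 j hj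
      (fun n => (∫ ω, (Δ n ω) ^ 2 ∂μ) - (∫ ω, N n ω ∂μ) / 3) hrecE
    have hT1 : Tendsto (fun n : ℕ => (∫ ω, N n ω ∂μ) / (n : ℝ) ^ p) atTop
        (𝓝 ((1 - p) * Real.Gamma (j : ℝ) / Real.Gamma ((j : ℝ) + p))) := by
      have hgr := aux_gamma_ratio p (by linarith)
      have hlim := hgr.const_mul ((1 - p) * Real.Gamma (j : ℝ) / Real.Gamma ((j : ℝ) + p))
      refine Tendsto.congr' ?_ (by simpa using hlim)
      filter_upwards [eventually_ge_atTop (max j 1)] with n hn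
      have hnj : j ≤ n := le_trans (le_max_left _ _) hn
      have hn0 : (0 : ℝ) ≤ (n : ℝ) := Nat.cast_nonneg n
      rw [show (∫ ω, N n ω ∂μ) = (1 - p) * Real.Gamma ((n : ℝ) + p) * Real.Gamma (j : ℝ)
        / (Real.Gamma ((j : ℝ) + p) * Real.Gamma (n : ℝ)) from hMcf n hnj,
        Real.rpow_neg hn0]
      ring
    have hT2 : Tendsto (fun n : ℕ =>
        ((∫ ω, (Δ n ω) ^ 2 ∂μ) - (∫ ω, N n ω ∂μ) / 3) / (n : ℝ) ^ p) atTop (𝓝 0) := by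
      apply squeeze_zero_norm'
        (a := fun n : ℕ => C * (n : ℝ) ^ (-(2 * p)) * (n : ℝ) ^ (-p))
      · filter_upwards [eventually_ge_atTop (max j 1)] with n hn
        have hnj : j ≤ n := le_trans (le_max_left _ _) hn
        have hn1 : 1 ≤ n := le_trans (le_max_right _ _) hn
        have hn0 : (0 : ℝ) < (n : ℝ) := by exact_mod_cast hn1
        have hnp : (0 : ℝ) < (n : ℝ) ^ p := Real.rpow_pos_of_pos hn0 p
        have h1 : |(∫ ω, (Δ n ω) ^ 2 ∂μ) - (∫ ω, N n ω ∂μ) / 3|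
            ≤ C * (n : ℝ) ^ (-(2 * p)) := hC n hnj
        calc ‖((∫ ω, (Δ n ω) ^ 2 ∂μ) - (∫ ω, N n ω ∂μ) / 3) / (n : ℝ) ^ p‖
            = |(∫ ω, (Δ n ω) ^ 2 ∂μ) - (∫ ω, N n ω ∂μ) / 3| * ((n : ℝ) ^ p)⁻¹ := by
              rw [Real.norm_eq_abs, abs_div, abs_of_nonneg hnp.le, div_eq_mul_inv]
          _ ≤ (C * (n : ℝ) ^ (-(2 * p))) * ((n : ℝ) ^ p)⁻¹ :=
              mul_le_mul_of_nonneg_right h1 (inv_nonneg.mpr hnp.le)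
          _ = C * (n : ℝ) ^ (-(2 * p)) * (n : ℝ) ^ (-p) := by
              rw [Real.rpow_neg hn0.le p]
      · have h2p : Tendsto (fun n : ℕ => ((n : ℝ)) ^ (-(2 * p))) atTop (𝓝 0) :=
          (tendsto_rpow_neg_atTop (by positivity)).comp tendsto_natCast_atTop_atTop
        have hpp : Tendsto (fun n : ℕ => ((n : ℝ)) ^ (-p)) atTop (𝓝 0) :=
          (tendsto_rpow_neg_atTop hp0).comp tendsto_natCast_atTop_atTop
        simpa using (h2p.const_mul C).mul hpp
    have hsum := (hT1.div_const 3).add hT2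
    have heq : (fun n : ℕ => ((∫ ω, N n ω ∂μ) / (n : ℝ) ^ p) / 3
        + ((∫ ω, (Δ n ω) ^ 2 ∂μ) - (∫ ω, N n ω ∂μ) / 3) / (n : ℝ) ^ p)
        = fun n : ℕ => (∫ ω, (Δ n ω) ^ 2 ∂μ) / (n : ℝ) ^ p := by
      funext n; ring
    rw [heq] at hsum
    have hval : (1 - p) * Real.Gamma (j : ℝ) / (3 * Real.Gamma ((j : ℝ) + p))
        = (1 - p) * Real.Gamma (j : ℝ) / Real.Gamma ((j : ℝ) + p) / 3 + 0 := by ring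
    rw [hval]
    exact hsum
end
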